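/- Let W be the Coxeter group of type E₆ (the Weyl group W(E₆)). Then for every y ∈ W, the centralizer C_W(y) contains no Carter subgroup of order 3; that is, every subgroup X of C_W(y) with |X| = 3 satisfies N_{C_W(y)}(X) ≠ X. -/

import Mathlib

namespace E6C
open CoxeterSystem List

abbrev B := Fin 6
abbrev Wd : Type := CoxeterMatrix.E₆.Group
def cs : CoxeterSystem CoxeterMatrix.E₆ Wd := CoxeterMatrix.E₆.toCoxeterSystem

local prefix:100 "π" => cs.wordProd
local prefix:100 "σ" => cs.simple

lemma braid3 {i j : B} (h : CoxeterMatrix.E₆ i j = 3) (x : Wd) :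
    σ i * (σ j * (σ i * x)) = σ j * (σ i * (σ j * x)) := by
  have hp := cs.simple_mul_simple_pow i j
  rw [h] at hp
  rw [pow_succ, pow_succ, pow_one] at hp
  have e : (σ i * (σ j * σ i)) * (σ j * (σ i * σ j)) = 1 := by
    rw [← hp]; group
  have h2 := eq_inv_of_mul_eq_one_left e
  have h3 : σ i * (σ j * σ i) = σ j * (σ i * σ j) := by
    rw [h2]; simp only [mul_inv_rev, cs.inv_simple]; group
  calc σ i * (σ j * (σ i * x)) = (σ i * (σ j * σ i)) * x := by group
    _ = (σ j * (σ i * σ j)) * x := by rw [h3]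
    _ = σ j * (σ i * (σ j * x)) := by group

lemma comm2 {i j : B} (h : CoxeterMatrix.E₆ i j = 2) (x : Wd) :
    σ i * (σ j * x) = σ j * (σ i * x) := by
  have hp := cs.simple_mul_simple_pow i j
  rw [h] at hp
  rw [pow_succ, pow_one] at hp
  have e : (σ i * σ j) * (σ i * σ j) = 1 := hp
  have h2 := eq_inv_of_mul_eq_one_left e
  have h3 : σ i * σ j = σ j * σ i := by
    rw [h2]; simp only [mul_inv_rev, cs.inv_simple]
  calc σ i * (σ j * x) = (σ i * σ j) * x := by group
    _ = (σ j * σ i) * x := by rw [h3]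
    _ = σ j * (σ i * x) := by group

lemma del2 (i : B) (x : Wd) : σ i * (σ i * x) = x := cs.simple_mul_simple_cancel_left i

inductive Mv where
  | braid (p : ℕ) (i j : B)
  | swap (p : ℕ) (i j : B)
  | del (p : ℕ) (i : B)

def ap (w : List B) : Mv → Option (List B)
  | .braid p i j =>
    if CoxeterMatrix.E₆ i j = 3 ∧ w.drop p = i :: j :: i :: w.drop (p+3) then
      some (w.take p ++ j :: i :: j :: w.drop (p+3)) else none
  | .swap p i j =>
    if CoxeterMatrix.E₆ i j = 2 ∧ w.drop p = i :: j :: w.drop (p+2) then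
      some (w.take p ++ j :: i :: w.drop (p+2)) else none
  | .del p i =>
    if w.drop p = i :: i :: w.drop (p+2) then
      some (w.take p ++ w.drop (p+2)) else none

def run (w : List B) : List Mv → Option (List B)
  | [] => some w
  | m :: ms =>
    match ap w m with
    | none => none
    | some w' => run w' ms

lemma pi_split (w : List B) (p : ℕ) : π w = π (w.take p) * π (w.drop p) := by
  rw [← cs.wordProd_append, take_append_drop]

lemma ap_sound {w w' : List B} {m : Mv} (h : ap w m = some w') : π w = π w' := by
  cases m with
  | braid p i j =>
    rw [ap] at h
    split_ifs at h with hc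
    · obtain ⟨h1, h2⟩ := hc
      injection h with h
      subst h
      rw [pi_split w p, h2]
      simp only [cs.wordProd_append, cs.wordProd_cons, mul_assoc]
      congr 1
      exact braid3 h1 _
  | swap p i j =>
    rw [ap] at h
    split_ifs at h with hc
    · obtain ⟨h1, h2⟩ := hc
      injection h with h
      subst h
      rw [pi_split w p, h2]
      simp only [cs.wordProd_append, cs.wordProd_cons, mul_assoc]
      congr 1
      exact comm2 h1 _
  | del p i =>
    rw [ap] at h
    split_ifs at h with hc
    · injection h with h
      subst h
      rw [pi_split w p, hc]
      simp only [cs.wordProd_append, cs.wordProd_cons, mul_assoc]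
      congr 1
      exact del2 i _

lemma run_sound : ∀ {ms : List Mv} {w w' : List B}, run w ms = some w' → π w = π w' := by
  intro ms
  induction ms with
  | nil => intro w w' h; rw [run] at h; injection h with h; rw [h]
  | cons m ms ih =>
    intro w w' h
    rw [run] at h
    cases hm : ap w m with
    | none => rw [hm] at h; exact absurd h (by simp)
    | some w₁ => rw [hm] at h; exact (ap_sound hm).trans (ih h)

lemma wordclose {T : List Wd} {gens : List B}
    (hT : ∀ t ∈ T, ∀ i ∈ gens, t * σ i ∈ T) :
    ∀ t ∈ T, ∀ h : List B, (∀ x ∈ h, x ∈ gens) → t * π h ∈ T := by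
  intro t ht h
  induction h generalizing t with
  | nil => intro _; simpa using ht
  | cons a l ih =>
    intro hsub
    have h1 : t * σ a ∈ T := hT t ht a (hsub a mem_cons_self)
    have h2 := ih (t * σ a) h1 (fun x hx => hsub x (mem_cons_of_mem _ hx))
    rw [cs.wordProd_cons, ← mul_assoc]
    exact h2


lemma step {Tp T : List Wd} {gens : List B} {reps : List (List B)}
    (hTdef : T = Tp.flatMap (fun t => reps.map (fun r => t * π r)))
    (hprev : ∀ t ∈ Tp, ∀ i ∈ gens, t * σ i ∈ Tp)
    {t : Wd} (ht : t ∈ Tp) (r : List B) (i : B)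
    (hword r' : List B) (ms : List Mv)
    (hrun : run (r ++ [i]) ms = some (hword ++ r'))
    (hsub : ∀ x ∈ hword, x ∈ gens)
    (hr' : r' ∈ reps) :
    (t * π r) * σ i ∈ T := by
  have hc := run_sound hrun
  rw [cs.wordProd_append, cs.wordProd_append, cs.wordProd_singleton] at hc
  rw [mul_assoc, hc, ← mul_assoc, hTdef]
  exact List.mem_flatMap.2 ⟨t * π hword, wordclose hprev t ht hword hsub,
    List.mem_map.2 ⟨r', hr', rfl⟩⟩

def T0 : List Wd := [1]
def gens0 : List B := []
lemma claim0 : ∀ t ∈ T0, ∀ i ∈ gens0, t * σ i ∈ T0 := by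
  intro t ht i hi; exact absurd hi List.not_mem_nil

def gens1 : List B := [5]
def reps1 : List (List B) := [[], [5]]
def T1 : List Wd := T0.flatMap (fun t => reps1.map (fun r => t * π r))
theorem claim1 : ∀ t ∈ T1, ∀ i ∈ gens1, t * σ i ∈ T1 := by
  intro t' ht' i hi
  obtain ⟨t, ht, hm⟩ := List.mem_flatMap.1 ht'
  obtain ⟨r, hr, rfl⟩ := List.mem_map.1 hm
  simp only [reps1, List.mem_cons, List.not_mem_nil, or_false] at hr
  simp only [gens1, List.mem_cons, List.not_mem_nil, or_false] at hi
  rcases hr with rfl|rfl <;> rcases hi with rfl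
  · exact step rfl claim0 ht [] 5 [] [5] [] (by decide) (by decide) (by decide)
  · exact step rfl claim0 ht [5] 5 [] [] [.del 0 5] (by decide) (by decide) (by decide)

def gens2 : List B := [4,5]
def reps2 : List (List B) := [[], [4], [4,5]]
def T2 : List Wd := T1.flatMap (fun t => reps2.map (fun r => t * π r))
theorem claim2 : ∀ t ∈ T2, ∀ i ∈ gens2, t * σ i ∈ T2 := by
  intro t' ht' i hi
  obtain ⟨t, ht, hm⟩ := List.mem_flatMap.1 ht'
  obtain ⟨r, hr, rfl⟩ := List.mem_map.1 hm
  simp only [reps2, List.mem_cons, List.not_mem_nil, or_false] at hr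
  simp only [gens2, List.mem_cons, List.not_mem_nil, or_false] at hi
  rcases hr with rfl|rfl|rfl <;> rcases hi with rfl|rfl
  · exact step rfl claim1 ht [] 4 [] [4] [] (by decide) (by decide) (by decide)
  · exact step rfl claim1 ht [] 5 [5] [] [] (by decide) (by decide) (by decide)
  · exact step rfl claim1 ht [4] 4 [] [] [.del 0 4] (by decide) (by decide) (by decide)
  · exact step rfl claim1 ht [4] 5 [] [4,5] [] (by decide) (by decide) (by decide)
  · exact step rfl claim1 ht [4,5] 4 [5] [4,5] [.braid 0 4 5] (by decide) (by decide) (by decide)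
  · exact step rfl claim1 ht [4,5] 5 [] [4] [.del 1 5] (by decide) (by decide) (by decide)

def gens3 : List B := [3,4,5]
def reps3 : List (List B) := [[], [3], [3,4], [3,4,5]]
def T3 : List Wd := T2.flatMap (fun t => reps3.map (fun r => t * π r))
theorem claim3 : ∀ t ∈ T3, ∀ i ∈ gens3, t * σ i ∈ T3 := by
  intro t' ht' i hi
  obtain ⟨t, ht, hm⟩ := List.mem_flatMap.1 ht'
  obtain ⟨r, hr, rfl⟩ := List.mem_map.1 hm
  simp only [reps3, List.mem_cons, List.not_mem_nil, or_false] at hr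
  simp only [gens3, List.mem_cons, List.not_mem_nil, or_false] at hi
  rcases hr with rfl|rfl|rfl|rfl <;> rcases hi with rfl|rfl|rfl
  · exact step rfl claim2 ht [] 3 [] [3] [] (by decide) (by decide) (by decide)
  · exact step rfl claim2 ht [] 4 [4] [] [] (by decide) (by decide) (by decide)
  · exact step rfl claim2 ht [] 5 [5] [] [] (by decide) (by decide) (by decide)
  · exact step rfl claim2 ht [3] 3 [] [] [.del 0 3] (by decide) (by decide) (by decide)
  · exact step rfl claim2 ht [3] 4 [] [3,4] [] (by decide) (by decide) (by decide)
  · exact step rfl claim2 ht [3] 5 [5] [3] [.swap 0 3 5] (by decide) (by decide) (by decide)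
  · exact step rfl claim2 ht [3,4] 3 [4] [3,4] [.braid 0 3 4] (by decide) (by decide) (by decide)
  · exact step rfl claim2 ht [3,4] 4 [] [3] [.del 1 4] (by decide) (by decide) (by decide)
  · exact step rfl claim2 ht [3,4] 5 [] [3,4,5] [] (by decide) (by decide) (by decide)
  · exact step rfl claim2 ht [3,4,5] 3 [4] [3,4,5] [.swap 2 5 3, .braid 0 3 4] (by decide) (by decide) (by decide)
  · exact step rfl claim2 ht [3,4,5] 4 [5] [3,4,5] [.braid 1 4 5, .swap 0 3 5] (by decide) (by decide) (by decide)
  · exact step rfl claim2 ht [3,4,5] 5 [] [3,4] [.del 2 5] (by decide) (by decide) (by decide)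

def gens4 : List B := [1,3,4,5]
def reps4 : List (List B) := [[], [1], [1,3], [1,3,4], [1,3,4,5]]
def T4 : List Wd := T3.flatMap (fun t => reps4.map (fun r => t * π r))
theorem claim4 : ∀ t ∈ T4, ∀ i ∈ gens4, t * σ i ∈ T4 := by
  intro t' ht' i hi
  obtain ⟨t, ht, hm⟩ := List.mem_flatMap.1 ht'
  obtain ⟨r, hr, rfl⟩ := List.mem_map.1 hm
  simp only [reps4, List.mem_cons, List.not_mem_nil, or_false] at hr
  simp only [gens4, List.mem_cons, List.not_mem_nil, or_false] at hi
  rcases hr with rfl|rfl|rfl|rfl|rfl <;> rcases hi with rfl|rfl|rfl|rfl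
  · exact step rfl claim3 ht [] 1 [] [1] [] (by decide) (by decide) (by decide)
  · exact step rfl claim3 ht [] 3 [3] [] [] (by decide) (by decide) (by decide)
  · exact step rfl claim3 ht [] 4 [4] [] [] (by decide) (by decide) (by decide)
  · exact step rfl claim3 ht [] 5 [5] [] [] (by decide) (by decide) (by decide)
  · exact step rfl claim3 ht [1] 1 [] [] [.del 0 1] (by decide) (by decide) (by decide)
  · exact step rfl claim3 ht [1] 3 [] [1,3] [] (by decide) (by decide) (by decide)
  · exact step rfl claim3 ht [1] 4 [4] [1] [.swap 0 1 4] (by decide) (by decide) (by decide)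
  · exact step rfl claim3 ht [1] 5 [5] [1] [.swap 0 1 5] (by decide) (by decide) (by decide)
  · exact step rfl claim3 ht [1,3] 1 [3] [1,3] [.braid 0 1 3] (by decide) (by decide) (by decide)
  · exact step rfl claim3 ht [1,3] 3 [] [1] [.del 1 3] (by decide) (by decide) (by decide)
  · exact step rfl claim3 ht [1,3] 4 [] [1,3,4] [] (by decide) (by decide) (by decide)
  · exact step rfl claim3 ht [1,3] 5 [5] [1,3] [.swap 1 3 5, .swap 0 1 5] (by decide) (by decide) (by decide)
  · exact step rfl claim3 ht [1,3,4] 1 [3] [1,3,4] [.swap 2 4 1, .braid 0 1 3] (by decide) (by decide) (by decide)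
  · exact step rfl claim3 ht [1,3,4] 3 [4] [1,3,4] [.braid 1 3 4, .swap 0 1 4] (by decide) (by decide) (by decide)
  · exact step rfl claim3 ht [1,3,4] 4 [] [1,3] [.del 2 4] (by decide) (by decide) (by decide)
  · exact step rfl claim3 ht [1,3,4] 5 [] [1,3,4,5] [] (by decide) (by decide) (by decide)
  · exact step rfl claim3 ht [1,3,4,5] 1 [3] [1,3,4,5] [.swap 3 5 1, .swap 2 4 1, .braid 0 1 3] (by decide) (by decide) (by decide)
  · exact step rfl claim3 ht [1,3,4,5] 3 [4] [1,3,4,5] [.swap 3 5 3, .braid 1 3 4, .swap 0 1 4] (by decide) (by decide) (by decide)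
  · exact step rfl claim3 ht [1,3,4,5] 4 [5] [1,3,4,5] [.braid 2 4 5, .swap 1 3 5, .swap 0 1 5] (by decide) (by decide) (by decide)
  · exact step rfl claim3 ht [1,3,4,5] 5 [] [1,3,4] [.del 3 5] (by decide) (by decide) (by decide)

def gens5 : List B := [1,2,3,4,5]
def reps5 : List (List B) := [[], [2], [2,3], [2,3,1], [2,3,4], [2,3,1,4], [2,3,4,5], [2,3,1,4,3], [2,3,1,4,5], [2,3,1,4,3,2], [2,3,1,4,3,5], [2,3,1,4,3,2,5], [2,3,1,4,3,5,4], [2,3,1,4,3,2,5,4], [2,3,1,4,3,2,5,4,3], [2,3,1,4,3,2,5,4,3,1]]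
def T5 : List Wd := T4.flatMap (fun t => reps5.map (fun r => t * π r))
theorem claim5 : ∀ t ∈ T5, ∀ i ∈ gens5, t * σ i ∈ T5 := by
  intro t' ht' i hi
  obtain ⟨t, ht, hm⟩ := List.mem_flatMap.1 ht'
  obtain ⟨r, hr, rfl⟩ := List.mem_map.1 hm
  simp only [reps5, List.mem_cons, List.not_mem_nil, or_false] at hr
  simp only [gens5, List.mem_cons, List.not_mem_nil, or_false] at hi
  rcases hr with rfl|rfl|rfl|rfl|rfl|rfl|rfl|rfl|rfl|rfl|rfl|rfl|rfl|rfl|rfl|rfl <;> rcases hi with rfl|rfl|rfl|rfl|rfl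
  · exact step rfl claim4 ht [] 1 [1] [] [] (by decide) (by decide) (by decide)
  · exact step rfl claim4 ht [] 2 [] [2] [] (by decide) (by decide) (by decide)
  · exact step rfl claim4 ht [] 3 [3] [] [] (by decide) (by decide) (by decide)
  · exact step rfl claim4 ht [] 4 [4] [] [] (by decide) (by decide) (by decide)
  · exact step rfl claim4 ht [] 5 [5] [] [] (by decide) (by decide) (by decide)
  · exact step rfl claim4 ht [2] 1 [1] [2] [.swap 0 2 1] (by decide) (by decide) (by decide)
  · exact step rfl claim4 ht [2] 2 [] [] [.del 0 2] (by decide) (by decide) (by decide)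
  · exact step rfl claim4 ht [2] 3 [] [2,3] [] (by decide) (by decide) (by decide)
  · exact step rfl claim4 ht [2] 4 [4] [2] [.swap 0 2 4] (by decide) (by decide) (by decide)
  · exact step rfl claim4 ht [2] 5 [5] [2] [.swap 0 2 5] (by decide) (by decide) (by decide)
  · exact step rfl claim4 ht [2,3] 1 [] [2,3,1] [] (by decide) (by decide) (by decide)
  · exact step rfl claim4 ht [2,3] 2 [3] [2,3] [.braid 0 2 3] (by decide) (by decide) (by decide)
  · exact step rfl claim4 ht [2,3] 3 [] [2] [.del 1 3] (by decide) (by decide) (by decide)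
  · exact step rfl claim4 ht [2,3] 4 [] [2,3,4] [] (by decide) (by decide) (by decide)
  · exact step rfl claim4 ht [2,3] 5 [5] [2,3] [.swap 1 3 5, .swap 0 2 5] (by decide) (by decide) (by decide)
  · exact step rfl claim4 ht [2,3,1] 1 [] [2,3] [.del 2 1] (by decide) (by decide) (by decide)
  · exact step rfl claim4 ht [2,3,1] 2 [3] [2,3,1] [.swap 2 1 2, .braid 0 2 3] (by decide) (by decide) (by decide)
  · exact step rfl claim4 ht [2,3,1] 3 [1] [2,3,1] [.braid 1 3 1, .swap 0 2 1] (by decide) (by decide) (by decide)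
  · exact step rfl claim4 ht [2,3,1] 4 [] [2,3,1,4] [] (by decide) (by decide) (by decide)
  · exact step rfl claim4 ht [2,3,1] 5 [5] [2,3,1] [.swap 2 1 5, .swap 1 3 5, .swap 0 2 5] (by decide) (by decide) (by decide)
  · exact step rfl claim4 ht [2,3,4] 1 [] [2,3,1,4] [.swap 2 4 1] (by decide) (by decide) (by decide)
  · exact step rfl claim4 ht [2,3,4] 2 [3] [2,3,4] [.swap 2 4 2, .braid 0 2 3] (by decide) (by decide) (by decide)
  · exact step rfl claim4 ht [2,3,4] 3 [4] [2,3,4] [.braid 1 3 4, .swap 0 2 4] (by decide) (by decide) (by decide)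
  · exact step rfl claim4 ht [2,3,4] 4 [] [2,3] [.del 2 4] (by decide) (by decide) (by decide)
  · exact step rfl claim4 ht [2,3,4] 5 [] [2,3,4,5] [] (by decide) (by decide) (by decide)
  · exact step rfl claim4 ht [2,3,1,4] 1 [] [2,3,4] [.swap 2 1 4, .del 3 1] (by decide) (by decide) (by decide)
  · exact step rfl claim4 ht [2,3,1,4] 2 [3] [2,3,1,4] [.swap 3 4 2, .swap 2 1 2, .braid 0 2 3] (by decide) (by decide) (by decide)
  · exact step rfl claim4 ht [2,3,1,4] 3 [] [2,3,1,4,3] [] (by decide) (by decide) (by decide)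
  · exact step rfl claim4 ht [2,3,1,4] 4 [] [2,3,1] [.del 3 4] (by decide) (by decide) (by decide)
  · exact step rfl claim4 ht [2,3,1,4] 5 [] [2,3,1,4,5] [] (by decide) (by decide) (by decide)
  · exact step rfl claim4 ht [2,3,4,5] 1 [] [2,3,1,4,5] [.swap 3 5 1, .swap 2 4 1] (by decide) (by decide) (by decide)
  · exact step rfl claim4 ht [2,3,4,5] 2 [3] [2,3,4,5] [.swap 3 5 2, .swap 2 4 2, .braid 0 2 3] (by decide) (by decide) (by decide)
  · exact step rfl claim4 ht [2,3,4,5] 3 [4] [2,3,4,5] [.swap 3 5 3, .braid 1 3 4, .swap 0 2 4] (by decide) (by decide) (by decide)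
  · exact step rfl claim4 ht [2,3,4,5] 4 [5] [2,3,4,5] [.braid 2 4 5, .swap 1 3 5, .swap 0 2 5] (by decide) (by decide) (by decide)
  · exact step rfl claim4 ht [2,3,4,5] 5 [] [2,3,4] [.del 3 5] (by decide) (by decide) (by decide)
  · exact step rfl claim4 ht [2,3,1,4,3] 1 [4] [2,3,1,4,3] [.swap 2 1 4, .braid 3 1 3, .braid 1 3 4, .swap 3 4 1, .swap 0 2 4] (by decide) (by decide) (by decide)
  · exact step rfl claim4 ht [2,3,1,4,3] 2 [] [2,3,1,4,3,2] [] (by decide) (by decide) (by decide)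
  · exact step rfl claim4 ht [2,3,1,4,3] 3 [] [2,3,1,4] [.del 4 3] (by decide) (by decide) (by decide)
  · exact step rfl claim4 ht [2,3,1,4,3] 4 [1] [2,3,1,4,3] [.braid 3 4 3, .braid 1 3 1, .swap 0 2 1] (by decide) (by decide) (by decide)
  · exact step rfl claim4 ht [2,3,1,4,3] 5 [] [2,3,1,4,3,5] [] (by decide) (by decide) (by decide)
  · exact step rfl claim4 ht [2,3,1,4,5] 1 [] [2,3,4,5] [.swap 2 1 4, .swap 3 1 5, .del 4 1] (by decide) (by decide) (by decide)
  · exact step rfl claim4 ht [2,3,1,4,5] 2 [3] [2,3,1,4,5] [.swap 4 5 2, .swap 3 4 2, .swap 2 1 2, .braid 0 2 3] (by decide) (by decide) (by decide)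
  · exact step rfl claim4 ht [2,3,1,4,5] 3 [] [2,3,1,4,3,5] [.swap 4 5 3] (by decide) (by decide) (by decide)
  · exact step rfl claim4 ht [2,3,1,4,5] 4 [5] [2,3,1,4,5] [.braid 3 4 5, .swap 2 1 5, .swap 1 3 5, .swap 0 2 5] (by decide) (by decide) (by decide)
  · exact step rfl claim4 ht [2,3,1,4,5] 5 [] [2,3,1,4] [.del 4 5] (by decide) (by decide) (by decide)
  · exact step rfl claim4 ht [2,3,1,4,3,2] 1 [4] [2,3,1,4,3,2] [.swap 5 2 1, .swap 2 1 4, .braid 3 1 3, .braid 1 3 4, .swap 3 4 1, .swap 0 2 4] (by decide) (by decide) (by decide)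
  · exact step rfl claim4 ht [2,3,1,4,3,2] 2 [] [2,3,1,4,3] [.del 5 2] (by decide) (by decide) (by decide)
  · exact step rfl claim4 ht [2,3,1,4,3,2] 3 [3] [2,3,1,4,3,2] [.braid 4 3 2, .swap 3 4 2, .swap 2 1 2, .braid 0 2 3] (by decide) (by decide) (by decide)
  · exact step rfl claim4 ht [2,3,1,4,3,2] 4 [1] [2,3,1,4,3,2] [.swap 5 2 4, .braid 3 4 3, .braid 1 3 1, .swap 0 2 1] (by decide) (by decide) (by decide)
  · exact step rfl claim4 ht [2,3,1,4,3,2] 5 [] [2,3,1,4,3,2,5] [] (by decide) (by decide) (by decide)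
  · exact step rfl claim4 ht [2,3,1,4,3,5] 1 [4] [2,3,1,4,3,5] [.swap 5 5 1, .swap 2 1 4, .braid 3 1 3, .braid 1 3 4, .swap 3 4 1, .swap 0 2 4] (by decide) (by decide) (by decide)
  · exact step rfl claim4 ht [2,3,1,4,3,5] 2 [] [2,3,1,4,3,2,5] [.swap 5 5 2] (by decide) (by decide) (by decide)
  · exact step rfl claim4 ht [2,3,1,4,3,5] 3 [] [2,3,1,4,5] [.swap 4 3 5, .del 5 3] (by decide) (by decide) (by decide)
  · exact step rfl claim4 ht [2,3,1,4,3,5] 4 [] [2,3,1,4,3,5,4] [] (by decide) (by decide) (by decide)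
  · exact step rfl claim4 ht [2,3,1,4,3,5] 5 [] [2,3,1,4,3] [.del 5 5] (by decide) (by decide) (by decide)
  · exact step rfl claim4 ht [2,3,1,4,3,2,5] 1 [4] [2,3,1,4,3,2,5] [.swap 6 5 1, .swap 5 2 1, .swap 2 1 4, .braid 3 1 3, .braid 1 3 4, .swap 3 4 1, .swap 0 2 4] (by decide) (by decide) (by decide)
  · exact step rfl claim4 ht [2,3,1,4,3,2,5] 2 [] [2,3,1,4,3,5] [.swap 5 2 5, .del 6 2] (by decide) (by decide) (by decide)
  · exact step rfl claim4 ht [2,3,1,4,3,2,5] 3 [3] [2,3,1,4,3,2,5] [.swap 6 5 3, .braid 4 3 2, .swap 3 4 2, .swap 2 1 2, .braid 0 2 3] (by decide) (by decide) (by decide)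
  · exact step rfl claim4 ht [2,3,1,4,3,2,5] 4 [] [2,3,1,4,3,2,5,4] [] (by decide) (by decide) (by decide)
  · exact step rfl claim4 ht [2,3,1,4,3,2,5] 5 [] [2,3,1,4,3,2] [.del 6 5] (by decide) (by decide) (by decide)
  · exact step rfl claim4 ht [2,3,1,4,3,5,4] 1 [4] [2,3,1,4,3,5,4] [.swap 6 4 1, .swap 5 5 1, .swap 2 1 4, .braid 3 1 3, .braid 1 3 4, .swap 3 4 1, .swap 0 2 4] (by decide) (by decide) (by decide)
  · exact step rfl claim4 ht [2,3,1,4,3,5,4] 2 [] [2,3,1,4,3,2,5,4] [.swap 6 4 2, .swap 5 5 2] (by decide) (by decide) (by decide)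
  · exact step rfl claim4 ht [2,3,1,4,3,5,4] 3 [5] [2,3,1,4,3,5,4] [.swap 4 3 5, .braid 5 3 4, .braid 3 4 5, .swap 5 5 3, .swap 2 1 5, .swap 1 3 5, .swap 0 2 5] (by decide) (by decide) (by decide)
  · exact step rfl claim4 ht [2,3,1,4,3,5,4] 4 [] [2,3,1,4,3,5] [.del 6 4] (by decide) (by decide) (by decide)
  · exact step rfl claim4 ht [2,3,1,4,3,5,4] 5 [1] [2,3,1,4,3,5,4] [.braid 5 5 4, .braid 3 4 3, .braid 1 3 1, .swap 0 2 1] (by decide) (by decide) (by decide)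
  · exact step rfl claim4 ht [2,3,1,4,3,2,5,4] 1 [4] [2,3,1,4,3,2,5,4] [.swap 7 4 1, .swap 6 5 1, .swap 5 2 1, .swap 2 1 4, .braid 3 1 3, .braid 1 3 4, .swap 3 4 1, .swap 0 2 4] (by decide) (by decide) (by decide)
  · exact step rfl claim4 ht [2,3,1,4,3,2,5,4] 2 [] [2,3,1,4,3,5,4] [.swap 5 2 5, .swap 6 2 4, .del 7 2] (by decide) (by decide) (by decide)
  · exact step rfl claim4 ht [2,3,1,4,3,2,5,4] 3 [] [2,3,1,4,3,2,5,4,3] [] (by decide) (by decide) (by decide)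
  · exact step rfl claim4 ht [2,3,1,4,3,2,5,4] 4 [] [2,3,1,4,3,2,5] [.del 7 4] (by decide) (by decide) (by decide)
  · exact step rfl claim4 ht [2,3,1,4,3,2,5,4] 5 [1] [2,3,1,4,3,2,5,4] [.braid 6 5 4, .swap 5 2 4, .braid 3 4 3, .braid 1 3 1, .swap 0 2 1] (by decide) (by decide) (by decide)
  · exact step rfl claim4 ht [2,3,1,4,3,2,5,4,3] 1 [] [2,3,1,4,3,2,5,4,3,1] [] (by decide) (by decide) (by decide)
  · exact step rfl claim4 ht [2,3,1,4,3,2,5,4,3] 2 [5] [2,3,1,4,3,2,5,4,3] [.swap 5 2 5, .swap 6 2 4, .braid 7 2 3, .swap 4 3 5, .braid 5 3 4, .swap 7 4 2, .braid 3 4 5, .swap 5 5 3, .swap 6 5 2, .swap 2 1 5, .swap 1 3 5, .swap 0 2 5] (by decide) (by decide) (by decide)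
  · exact step rfl claim4 ht [2,3,1,4,3,2,5,4,3] 3 [] [2,3,1,4,3,2,5,4] [.del 8 3] (by decide) (by decide) (by decide)
  · exact step rfl claim4 ht [2,3,1,4,3,2,5,4,3] 4 [3] [2,3,1,4,3,2,5,4,3] [.braid 7 4 3, .swap 6 5 3, .braid 4 3 2, .swap 3 4 2, .swap 2 1 2, .braid 0 2 3] (by decide) (by decide) (by decide)
  · exact step rfl claim4 ht [2,3,1,4,3,2,5,4,3] 5 [1] [2,3,1,4,3,2,5,4,3] [.swap 8 3 5, .braid 6 5 4, .swap 5 2 4, .braid 3 4 3, .braid 1 3 1, .swap 0 2 1] (by decide) (by decide) (by decide)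
  · exact step rfl claim4 ht [2,3,1,4,3,2,5,4,3,1] 1 [] [2,3,1,4,3,2,5,4,3] [.del 9 1] (by decide) (by decide) (by decide)
  · exact step rfl claim4 ht [2,3,1,4,3,2,5,4,3,1] 2 [5] [2,3,1,4,3,2,5,4,3,1] [.swap 9 1 2, .swap 5 2 5, .swap 6 2 4, .braid 7 2 3, .swap 4 3 5, .braid 5 3 4, .swap 7 4 2, .braid 3 4 5, .swap 5 5 3, .swap 6 5 2, .swap 2 1 5, .swap 1 3 5, .swap 0 2 5] (by decide) (by decide) (by decide)
  · exact step rfl claim4 ht [2,3,1,4,3,2,5,4,3,1] 3 [4] [2,3,1,4,3,2,5,4,3,1] [.braid 8 3 1, .swap 7 4 1, .swap 6 5 1, .swap 5 2 1, .swap 2 1 4, .braid 3 1 3, .braid 1 3 4, .swap 3 4 1, .swap 0 2 4] (by decide) (by decide) (by decide)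
  · exact step rfl claim4 ht [2,3,1,4,3,2,5,4,3,1] 4 [3] [2,3,1,4,3,2,5,4,3,1] [.swap 9 1 4, .braid 7 4 3, .swap 6 5 3, .braid 4 3 2, .swap 3 4 2, .swap 2 1 2, .braid 0 2 3] (by decide) (by decide) (by decide)
  · exact step rfl claim4 ht [2,3,1,4,3,2,5,4,3,1] 5 [1] [2,3,1,4,3,2,5,4,3,1] [.swap 9 1 5, .swap 8 3 5, .braid 6 5 4, .swap 5 2 4, .braid 3 4 3, .braid 1 3 1, .swap 0 2 1] (by decide) (by decide) (by decide)

def gens6 : List B := [0,1,2,3,4,5]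
def reps6 : List (List B) := [[], [0], [0,2], [0,2,3], [0,2,3,1], [0,2,3,4], [0,2,3,1,4], [0,2,3,4,5], [0,2,3,1,4,3], [0,2,3,1,4,5], [0,2,3,1,4,3,2], [0,2,3,1,4,3,5], [0,2,3,1,4,3,2,0], [0,2,3,1,4,3,2,5], [0,2,3,1,4,3,5,4], [0,2,3,1,4,3,2,0,5], [0,2,3,1,4,3,2,5,4], [0,2,3,1,4,3,2,0,5,4], [0,2,3,1,4,3,2,5,4,3], [0,2,3,1,4,3,2,0,5,4,3], [0,2,3,1,4,3,2,5,4,3,1], [0,2,3,1,4,3,2,0,5,4,3,1], [0,2,3,1,4,3,2,0,5,4,3,2], [0,2,3,1,4,3,2,0,5,4,3,1,2], [0,2,3,1,4,3,2,0,5,4,3,1,2,3], [0,2,3,1,4,3,2,0,5,4,3,1,2,3,4], [0,2,3,1,4,3,2,0,5,4,3,1,2,3,4,5]]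
def T6 : List Wd := T5.flatMap (fun t => reps6.map (fun r => t * π r))
theorem claim6 : ∀ t ∈ T6, ∀ i ∈ gens6, t * σ i ∈ T6 := by
  intro t' ht' i hi
  obtain ⟨t, ht, hm⟩ := List.mem_flatMap.1 ht'
  obtain ⟨r, hr, rfl⟩ := List.mem_map.1 hm
  simp only [reps6, List.mem_cons, List.not_mem_nil, or_false] at hr
  simp only [gens6, List.mem_cons, List.not_mem_nil, or_false] at hi
  rcases hr with rfl|rfl|rfl|rfl|rfl|rfl|rfl|rfl|rfl|rfl|rfl|rfl|rfl|rfl|rfl|rfl|rfl|rfl|rfl|rfl|rfl|rfl|rfl|rfl|rfl|rfl|rfl <;> rcases hi with rfl|rfl|rfl|rfl|rfl|rfl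
  · exact step rfl claim5 ht [] 0 [] [0] [] (by decide) (by decide) (by decide)
  · exact step rfl claim5 ht [] 1 [1] [] [] (by decide) (by decide) (by decide)
  · exact step rfl claim5 ht [] 2 [2] [] [] (by decide) (by decide) (by decide)
  · exact step rfl claim5 ht [] 3 [3] [] [] (by decide) (by decide) (by decide)
  · exact step rfl claim5 ht [] 4 [4] [] [] (by decide) (by decide) (by decide)
  · exact step rfl claim5 ht [] 5 [5] [] [] (by decide) (by decide) (by decide)
  · exact step rfl claim5 ht [0] 0 [] [] [.del 0 0] (by decide) (by decide) (by decide)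
  · exact step rfl claim5 ht [0] 1 [1] [0] [.swap 0 0 1] (by decide) (by decide) (by decide)
  · exact step rfl claim5 ht [0] 2 [] [0,2] [] (by decide) (by decide) (by decide)
  · exact step rfl claim5 ht [0] 3 [3] [0] [.swap 0 0 3] (by decide) (by decide) (by decide)
  · exact step rfl claim5 ht [0] 4 [4] [0] [.swap 0 0 4] (by decide) (by decide) (by decide)
  · exact step rfl claim5 ht [0] 5 [5] [0] [.swap 0 0 5] (by decide) (by decide) (by decide)
  · exact step rfl claim5 ht [0,2] 0 [2] [0,2] [.braid 0 0 2] (by decide) (by decide) (by decide)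
  · exact step rfl claim5 ht [0,2] 1 [1] [0,2] [.swap 1 2 1, .swap 0 0 1] (by decide) (by decide) (by decide)
  · exact step rfl claim5 ht [0,2] 2 [] [0] [.del 1 2] (by decide) (by decide) (by decide)
  · exact step rfl claim5 ht [0,2] 3 [] [0,2,3] [] (by decide) (by decide) (by decide)
  · exact step rfl claim5 ht [0,2] 4 [4] [0,2] [.swap 1 2 4, .swap 0 0 4] (by decide) (by decide) (by decide)
  · exact step rfl claim5 ht [0,2] 5 [5] [0,2] [.swap 1 2 5, .swap 0 0 5] (by decide) (by decide) (by decide)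
  · exact step rfl claim5 ht [0,2,3] 0 [2] [0,2,3] [.swap 2 3 0, .braid 0 0 2] (by decide) (by decide) (by decide)
  · exact step rfl claim5 ht [0,2,3] 1 [] [0,2,3,1] [] (by decide) (by decide) (by decide)
  · exact step rfl claim5 ht [0,2,3] 2 [3] [0,2,3] [.braid 1 2 3, .swap 0 0 3] (by decide) (by decide) (by decide)
  · exact step rfl claim5 ht [0,2,3] 3 [] [0,2] [.del 2 3] (by decide) (by decide) (by decide)
  · exact step rfl claim5 ht [0,2,3] 4 [] [0,2,3,4] [] (by decide) (by decide) (by decide)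
  · exact step rfl claim5 ht [0,2,3] 5 [5] [0,2,3] [.swap 2 3 5, .swap 1 2 5, .swap 0 0 5] (by decide) (by decide) (by decide)
  · exact step rfl claim5 ht [0,2,3,1] 0 [2] [0,2,3,1] [.swap 3 1 0, .swap 2 3 0, .braid 0 0 2] (by decide) (by decide) (by decide)
  · exact step rfl claim5 ht [0,2,3,1] 1 [] [0,2,3] [.del 3 1] (by decide) (by decide) (by decide)
  · exact step rfl claim5 ht [0,2,3,1] 2 [3] [0,2,3,1] [.swap 3 1 2, .braid 1 2 3, .swap 0 0 3] (by decide) (by decide) (by decide)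
  · exact step rfl claim5 ht [0,2,3,1] 3 [1] [0,2,3,1] [.braid 2 3 1, .swap 1 2 1, .swap 0 0 1] (by decide) (by decide) (by decide)
  · exact step rfl claim5 ht [0,2,3,1] 4 [] [0,2,3,1,4] [] (by decide) (by decide) (by decide)
  · exact step rfl claim5 ht [0,2,3,1] 5 [5] [0,2,3,1] [.swap 3 1 5, .swap 2 3 5, .swap 1 2 5, .swap 0 0 5] (by decide) (by decide) (by decide)
  · exact step rfl claim5 ht [0,2,3,4] 0 [2] [0,2,3,4] [.swap 3 4 0, .swap 2 3 0, .braid 0 0 2] (by decide) (by decide) (by decide)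
  · exact step rfl claim5 ht [0,2,3,4] 1 [] [0,2,3,1,4] [.swap 3 4 1] (by decide) (by decide) (by decide)
  · exact step rfl claim5 ht [0,2,3,4] 2 [3] [0,2,3,4] [.swap 3 4 2, .braid 1 2 3, .swap 0 0 3] (by decide) (by decide) (by decide)
  · exact step rfl claim5 ht [0,2,3,4] 3 [4] [0,2,3,4] [.braid 2 3 4, .swap 1 2 4, .swap 0 0 4] (by decide) (by decide) (by decide)
  · exact step rfl claim5 ht [0,2,3,4] 4 [] [0,2,3] [.del 3 4] (by decide) (by decide) (by decide)
  · exact step rfl claim5 ht [0,2,3,4] 5 [] [0,2,3,4,5] [] (by decide) (by decide) (by decide)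
  · exact step rfl claim5 ht [0,2,3,1,4] 0 [2] [0,2,3,1,4] [.swap 4 4 0, .swap 3 1 0, .swap 2 3 0, .braid 0 0 2] (by decide) (by decide) (by decide)
  · exact step rfl claim5 ht [0,2,3,1,4] 1 [] [0,2,3,4] [.swap 3 1 4, .del 4 1] (by decide) (by decide) (by decide)
  · exact step rfl claim5 ht [0,2,3,1,4] 2 [3] [0,2,3,1,4] [.swap 4 4 2, .swap 3 1 2, .braid 1 2 3, .swap 0 0 3] (by decide) (by decide) (by decide)
  · exact step rfl claim5 ht [0,2,3,1,4] 3 [] [0,2,3,1,4,3] [] (by decide) (by decide) (by decide)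
  · exact step rfl claim5 ht [0,2,3,1,4] 4 [] [0,2,3,1] [.del 4 4] (by decide) (by decide) (by decide)
  · exact step rfl claim5 ht [0,2,3,1,4] 5 [] [0,2,3,1,4,5] [] (by decide) (by decide) (by decide)
  · exact step rfl claim5 ht [0,2,3,4,5] 0 [2] [0,2,3,4,5] [.swap 4 5 0, .swap 3 4 0, .swap 2 3 0, .braid 0 0 2] (by decide) (by decide) (by decide)
  · exact step rfl claim5 ht [0,2,3,4,5] 1 [] [0,2,3,1,4,5] [.swap 4 5 1, .swap 3 4 1] (by decide) (by decide) (by decide)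
  · exact step rfl claim5 ht [0,2,3,4,5] 2 [3] [0,2,3,4,5] [.swap 4 5 2, .swap 3 4 2, .braid 1 2 3, .swap 0 0 3] (by decide) (by decide) (by decide)
  · exact step rfl claim5 ht [0,2,3,4,5] 3 [4] [0,2,3,4,5] [.swap 4 5 3, .braid 2 3 4, .swap 1 2 4, .swap 0 0 4] (by decide) (by decide) (by decide)
  · exact step rfl claim5 ht [0,2,3,4,5] 4 [5] [0,2,3,4,5] [.braid 3 4 5, .swap 2 3 5, .swap 1 2 5, .swap 0 0 5] (by decide) (by decide) (by decide)
  · exact step rfl claim5 ht [0,2,3,4,5] 5 [] [0,2,3,4] [.del 4 5] (by decide) (by decide) (by decide)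
  · exact step rfl claim5 ht [0,2,3,1,4,3] 0 [2] [0,2,3,1,4,3] [.swap 5 3 0, .swap 4 4 0, .swap 3 1 0, .swap 2 3 0, .braid 0 0 2] (by decide) (by decide) (by decide)
  · exact step rfl claim5 ht [0,2,3,1,4,3] 1 [4] [0,2,3,1,4,3] [.swap 3 1 4, .braid 4 1 3, .braid 2 3 4, .swap 4 4 1, .swap 1 2 4, .swap 0 0 4] (by decide) (by decide) (by decide)
  · exact step rfl claim5 ht [0,2,3,1,4,3] 2 [] [0,2,3,1,4,3,2] [] (by decide) (by decide) (by decide)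
  · exact step rfl claim5 ht [0,2,3,1,4,3] 3 [] [0,2,3,1,4] [.del 5 3] (by decide) (by decide) (by decide)
  · exact step rfl claim5 ht [0,2,3,1,4,3] 4 [1] [0,2,3,1,4,3] [.braid 4 4 3, .braid 2 3 1, .swap 1 2 1, .swap 0 0 1] (by decide) (by decide) (by decide)
  · exact step rfl claim5 ht [0,2,3,1,4,3] 5 [] [0,2,3,1,4,3,5] [] (by decide) (by decide) (by decide)
  · exact step rfl claim5 ht [0,2,3,1,4,5] 0 [2] [0,2,3,1,4,5] [.swap 5 5 0, .swap 4 4 0, .swap 3 1 0, .swap 2 3 0, .braid 0 0 2] (by decide) (by decide) (by decide)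
  · exact step rfl claim5 ht [0,2,3,1,4,5] 1 [] [0,2,3,4,5] [.swap 3 1 4, .swap 4 1 5, .del 5 1] (by decide) (by decide) (by decide)
  · exact step rfl claim5 ht [0,2,3,1,4,5] 2 [3] [0,2,3,1,4,5] [.swap 5 5 2, .swap 4 4 2, .swap 3 1 2, .braid 1 2 3, .swap 0 0 3] (by decide) (by decide) (by decide)
  · exact step rfl claim5 ht [0,2,3,1,4,5] 3 [] [0,2,3,1,4,3,5] [.swap 5 5 3] (by decide) (by decide) (by decide)
  · exact step rfl claim5 ht [0,2,3,1,4,5] 4 [5] [0,2,3,1,4,5] [.braid 4 4 5, .swap 3 1 5, .swap 2 3 5, .swap 1 2 5, .swap 0 0 5] (by decide) (by decide) (by decide)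
  · exact step rfl claim5 ht [0,2,3,1,4,5] 5 [] [0,2,3,1,4] [.del 5 5] (by decide) (by decide) (by decide)
  · exact step rfl claim5 ht [0,2,3,1,4,3,2] 0 [] [0,2,3,1,4,3,2,0] [] (by decide) (by decide) (by decide)
  · exact step rfl claim5 ht [0,2,3,1,4,3,2] 1 [4] [0,2,3,1,4,3,2] [.swap 6 2 1, .swap 3 1 4, .braid 4 1 3, .braid 2 3 4, .swap 4 4 1, .swap 1 2 4, .swap 0 0 4] (by decide) (by decide) (by decide)
  · exact step rfl claim5 ht [0,2,3,1,4,3,2] 2 [] [0,2,3,1,4,3] [.del 6 2] (by decide) (by decide) (by decide)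
  · exact step rfl claim5 ht [0,2,3,1,4,3,2] 3 [3] [0,2,3,1,4,3,2] [.braid 5 3 2, .swap 4 4 2, .swap 3 1 2, .braid 1 2 3, .swap 0 0 3] (by decide) (by decide) (by decide)
  · exact step rfl claim5 ht [0,2,3,1,4,3,2] 4 [1] [0,2,3,1,4,3,2] [.swap 6 2 4, .braid 4 4 3, .braid 2 3 1, .swap 1 2 1, .swap 0 0 1] (by decide) (by decide) (by decide)
  · exact step rfl claim5 ht [0,2,3,1,4,3,2] 5 [] [0,2,3,1,4,3,2,5] [] (by decide) (by decide) (by decide)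
  · exact step rfl claim5 ht [0,2,3,1,4,3,5] 0 [2] [0,2,3,1,4,3,5] [.swap 6 5 0, .swap 5 3 0, .swap 4 4 0, .swap 3 1 0, .swap 2 3 0, .braid 0 0 2] (by decide) (by decide) (by decide)
  · exact step rfl claim5 ht [0,2,3,1,4,3,5] 1 [4] [0,2,3,1,4,3,5] [.swap 6 5 1, .swap 3 1 4, .braid 4 1 3, .braid 2 3 4, .swap 4 4 1, .swap 1 2 4, .swap 0 0 4] (by decide) (by decide) (by decide)
  · exact step rfl claim5 ht [0,2,3,1,4,3,5] 2 [] [0,2,3,1,4,3,2,5] [.swap 6 5 2] (by decide) (by decide) (by decide)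
  · exact step rfl claim5 ht [0,2,3,1,4,3,5] 3 [] [0,2,3,1,4,5] [.swap 5 3 5, .del 6 3] (by decide) (by decide) (by decide)
  · exact step rfl claim5 ht [0,2,3,1,4,3,5] 4 [] [0,2,3,1,4,3,5,4] [] (by decide) (by decide) (by decide)
  · exact step rfl claim5 ht [0,2,3,1,4,3,5] 5 [] [0,2,3,1,4,3] [.del 6 5] (by decide) (by decide) (by decide)
  · exact step rfl claim5 ht [0,2,3,1,4,3,2,0] 0 [] [0,2,3,1,4,3,2] [.del 7 0] (by decide) (by decide) (by decide)
  · exact step rfl claim5 ht [0,2,3,1,4,3,2,0] 1 [4] [0,2,3,1,4,3,2,0] [.swap 7 0 1, .swap 6 2 1, .swap 3 1 4, .braid 4 1 3, .braid 2 3 4, .swap 4 4 1, .swap 1 2 4, .swap 0 0 4] (by decide) (by decide) (by decide)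
  · exact step rfl claim5 ht [0,2,3,1,4,3,2,0] 2 [2] [0,2,3,1,4,3,2,0] [.braid 6 2 0, .swap 5 3 0, .swap 4 4 0, .swap 3 1 0, .swap 2 3 0, .braid 0 0 2] (by decide) (by decide) (by decide)
  · exact step rfl claim5 ht [0,2,3,1,4,3,2,0] 3 [3] [0,2,3,1,4,3,2,0] [.swap 7 0 3, .braid 5 3 2, .swap 4 4 2, .swap 3 1 2, .braid 1 2 3, .swap 0 0 3] (by decide) (by decide) (by decide)
  · exact step rfl claim5 ht [0,2,3,1,4,3,2,0] 4 [1] [0,2,3,1,4,3,2,0] [.swap 7 0 4, .swap 6 2 4, .braid 4 4 3, .braid 2 3 1, .swap 1 2 1, .swap 0 0 1] (by decide) (by decide) (by decide)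
  · exact step rfl claim5 ht [0,2,3,1,4,3,2,0] 5 [] [0,2,3,1,4,3,2,0,5] [] (by decide) (by decide) (by decide)
  · exact step rfl claim5 ht [0,2,3,1,4,3,2,5] 0 [] [0,2,3,1,4,3,2,0,5] [.swap 7 5 0] (by decide) (by decide) (by decide)
  · exact step rfl claim5 ht [0,2,3,1,4,3,2,5] 1 [4] [0,2,3,1,4,3,2,5] [.swap 7 5 1, .swap 6 2 1, .swap 3 1 4, .braid 4 1 3, .braid 2 3 4, .swap 4 4 1, .swap 1 2 4, .swap 0 0 4] (by decide) (by decide) (by decide)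
  · exact step rfl claim5 ht [0,2,3,1,4,3,2,5] 2 [] [0,2,3,1,4,3,5] [.swap 6 2 5, .del 7 2] (by decide) (by decide) (by decide)
  · exact step rfl claim5 ht [0,2,3,1,4,3,2,5] 3 [3] [0,2,3,1,4,3,2,5] [.swap 7 5 3, .braid 5 3 2, .swap 4 4 2, .swap 3 1 2, .braid 1 2 3, .swap 0 0 3] (by decide) (by decide) (by decide)
  · exact step rfl claim5 ht [0,2,3,1,4,3,2,5] 4 [] [0,2,3,1,4,3,2,5,4] [] (by decide) (by decide) (by decide)
  · exact step rfl claim5 ht [0,2,3,1,4,3,2,5] 5 [] [0,2,3,1,4,3,2] [.del 7 5] (by decide) (by decide) (by decide)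
  · exact step rfl claim5 ht [0,2,3,1,4,3,5,4] 0 [2] [0,2,3,1,4,3,5,4] [.swap 7 4 0, .swap 6 5 0, .swap 5 3 0, .swap 4 4 0, .swap 3 1 0, .swap 2 3 0, .braid 0 0 2] (by decide) (by decide) (by decide)
  · exact step rfl claim5 ht [0,2,3,1,4,3,5,4] 1 [4] [0,2,3,1,4,3,5,4] [.swap 7 4 1, .swap 6 5 1, .swap 3 1 4, .braid 4 1 3, .braid 2 3 4, .swap 4 4 1, .swap 1 2 4, .swap 0 0 4] (by decide) (by decide) (by decide)
  · exact step rfl claim5 ht [0,2,3,1,4,3,5,4] 2 [] [0,2,3,1,4,3,2,5,4] [.swap 7 4 2, .swap 6 5 2] (by decide) (by decide) (by decide)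
  · exact step rfl claim5 ht [0,2,3,1,4,3,5,4] 3 [5] [0,2,3,1,4,3,5,4] [.swap 5 3 5, .braid 6 3 4, .braid 4 4 5, .swap 6 5 3, .swap 3 1 5, .swap 2 3 5, .swap 1 2 5, .swap 0 0 5] (by decide) (by decide) (by decide)
  · exact step rfl claim5 ht [0,2,3,1,4,3,5,4] 4 [] [0,2,3,1,4,3,5] [.del 7 4] (by decide) (by decide) (by decide)
  · exact step rfl claim5 ht [0,2,3,1,4,3,5,4] 5 [1] [0,2,3,1,4,3,5,4] [.braid 6 5 4, .braid 4 4 3, .braid 2 3 1, .swap 1 2 1, .swap 0 0 1] (by decide) (by decide) (by decide)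
  · exact step rfl claim5 ht [0,2,3,1,4,3,2,0,5] 0 [] [0,2,3,1,4,3,2,5] [.swap 7 0 5, .del 8 0] (by decide) (by decide) (by decide)
  · exact step rfl claim5 ht [0,2,3,1,4,3,2,0,5] 1 [4] [0,2,3,1,4,3,2,0,5] [.swap 8 5 1, .swap 7 0 1, .swap 6 2 1, .swap 3 1 4, .braid 4 1 3, .braid 2 3 4, .swap 4 4 1, .swap 1 2 4, .swap 0 0 4] (by decide) (by decide) (by decide)
  · exact step rfl claim5 ht [0,2,3,1,4,3,2,0,5] 2 [2] [0,2,3,1,4,3,2,0,5] [.swap 8 5 2, .braid 6 2 0, .swap 5 3 0, .swap 4 4 0, .swap 3 1 0, .swap 2 3 0, .braid 0 0 2] (by decide) (by decide) (by decide)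
  · exact step rfl claim5 ht [0,2,3,1,4,3,2,0,5] 3 [3] [0,2,3,1,4,3,2,0,5] [.swap 8 5 3, .swap 7 0 3, .braid 5 3 2, .swap 4 4 2, .swap 3 1 2, .braid 1 2 3, .swap 0 0 3] (by decide) (by decide) (by decide)
  · exact step rfl claim5 ht [0,2,3,1,4,3,2,0,5] 4 [] [0,2,3,1,4,3,2,0,5,4] [] (by decide) (by decide) (by decide)
  · exact step rfl claim5 ht [0,2,3,1,4,3,2,0,5] 5 [] [0,2,3,1,4,3,2,0] [.del 8 5] (by decide) (by decide) (by decide)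
  · exact step rfl claim5 ht [0,2,3,1,4,3,2,5,4] 0 [] [0,2,3,1,4,3,2,0,5,4] [.swap 8 4 0, .swap 7 5 0] (by decide) (by decide) (by decide)
  · exact step rfl claim5 ht [0,2,3,1,4,3,2,5,4] 1 [4] [0,2,3,1,4,3,2,5,4] [.swap 8 4 1, .swap 7 5 1, .swap 6 2 1, .swap 3 1 4, .braid 4 1 3, .braid 2 3 4, .swap 4 4 1, .swap 1 2 4, .swap 0 0 4] (by decide) (by decide) (by decide)
  · exact step rfl claim5 ht [0,2,3,1,4,3,2,5,4] 2 [] [0,2,3,1,4,3,5,4] [.swap 6 2 5, .swap 7 2 4, .del 8 2] (by decide) (by decide) (by decide)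
  · exact step rfl claim5 ht [0,2,3,1,4,3,2,5,4] 3 [] [0,2,3,1,4,3,2,5,4,3] [] (by decide) (by decide) (by decide)
  · exact step rfl claim5 ht [0,2,3,1,4,3,2,5,4] 4 [] [0,2,3,1,4,3,2,5] [.del 8 4] (by decide) (by decide) (by decide)
  · exact step rfl claim5 ht [0,2,3,1,4,3,2,5,4] 5 [1] [0,2,3,1,4,3,2,5,4] [.braid 7 5 4, .swap 6 2 4, .braid 4 4 3, .braid 2 3 1, .swap 1 2 1, .swap 0 0 1] (by decide) (by decide) (by decide)
  · exact step rfl claim5 ht [0,2,3,1,4,3,2,0,5,4] 0 [] [0,2,3,1,4,3,2,5,4] [.swap 7 0 5, .swap 8 0 4, .del 9 0] (by decide) (by decide) (by decide)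
  · exact step rfl claim5 ht [0,2,3,1,4,3,2,0,5,4] 1 [4] [0,2,3,1,4,3,2,0,5,4] [.swap 9 4 1, .swap 8 5 1, .swap 7 0 1, .swap 6 2 1, .swap 3 1 4, .braid 4 1 3, .braid 2 3 4, .swap 4 4 1, .swap 1 2 4, .swap 0 0 4] (by decide) (by decide) (by decide)
  · exact step rfl claim5 ht [0,2,3,1,4,3,2,0,5,4] 2 [2] [0,2,3,1,4,3,2,0,5,4] [.swap 9 4 2, .swap 8 5 2, .braid 6 2 0, .swap 5 3 0, .swap 4 4 0, .swap 3 1 0, .swap 2 3 0, .braid 0 0 2] (by decide) (by decide) (by decide)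
  · exact step rfl claim5 ht [0,2,3,1,4,3,2,0,5,4] 3 [] [0,2,3,1,4,3,2,0,5,4,3] [] (by decide) (by decide) (by decide)
  · exact step rfl claim5 ht [0,2,3,1,4,3,2,0,5,4] 4 [] [0,2,3,1,4,3,2,0,5] [.del 9 4] (by decide) (by decide) (by decide)
  · exact step rfl claim5 ht [0,2,3,1,4,3,2,0,5,4] 5 [1] [0,2,3,1,4,3,2,0,5,4] [.braid 8 5 4, .swap 7 0 4, .swap 6 2 4, .braid 4 4 3, .braid 2 3 1, .swap 1 2 1, .swap 0 0 1] (by decide) (by decide) (by decide)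
  · exact step rfl claim5 ht [0,2,3,1,4,3,2,5,4,3] 0 [] [0,2,3,1,4,3,2,0,5,4,3] [.swap 9 3 0, .swap 8 4 0, .swap 7 5 0] (by decide) (by decide) (by decide)
  · exact step rfl claim5 ht [0,2,3,1,4,3,2,5,4,3] 1 [] [0,2,3,1,4,3,2,5,4,3,1] [] (by decide) (by decide) (by decide)
  · exact step rfl claim5 ht [0,2,3,1,4,3,2,5,4,3] 2 [5] [0,2,3,1,4,3,2,5,4,3] [.swap 6 2 5, .swap 7 2 4, .braid 8 2 3, .swap 5 3 5, .braid 6 3 4, .swap 8 4 2, .braid 4 4 5, .swap 6 5 3, .swap 7 5 2, .swap 3 1 5, .swap 2 3 5, .swap 1 2 5, .swap 0 0 5] (by decide) (by decide) (by decide)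
  · exact step rfl claim5 ht [0,2,3,1,4,3,2,5,4,3] 3 [] [0,2,3,1,4,3,2,5,4] [.del 9 3] (by decide) (by decide) (by decide)
  · exact step rfl claim5 ht [0,2,3,1,4,3,2,5,4,3] 4 [3] [0,2,3,1,4,3,2,5,4,3] [.braid 8 4 3, .swap 7 5 3, .braid 5 3 2, .swap 4 4 2, .swap 3 1 2, .braid 1 2 3, .swap 0 0 3] (by decide) (by decide) (by decide)
  · exact step rfl claim5 ht [0,2,3,1,4,3,2,5,4,3] 5 [1] [0,2,3,1,4,3,2,5,4,3] [.swap 9 3 5, .braid 7 5 4, .swap 6 2 4, .braid 4 4 3, .braid 2 3 1, .swap 1 2 1, .swap 0 0 1] (by decide) (by decide) (by decide)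
  · exact step rfl claim5 ht [0,2,3,1,4,3,2,0,5,4,3] 0 [] [0,2,3,1,4,3,2,5,4,3] [.swap 7 0 5, .swap 8 0 4, .swap 9 0 3, .del 10 0] (by decide) (by decide) (by decide)
  · exact step rfl claim5 ht [0,2,3,1,4,3,2,0,5,4,3] 1 [] [0,2,3,1,4,3,2,0,5,4,3,1] [] (by decide) (by decide) (by decide)
  · exact step rfl claim5 ht [0,2,3,1,4,3,2,0,5,4,3] 2 [] [0,2,3,1,4,3,2,0,5,4,3,2] [] (by decide) (by decide) (by decide)
  · exact step rfl claim5 ht [0,2,3,1,4,3,2,0,5,4,3] 3 [] [0,2,3,1,4,3,2,0,5,4] [.del 10 3] (by decide) (by decide) (by decide)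
  · exact step rfl claim5 ht [0,2,3,1,4,3,2,0,5,4,3] 4 [3] [0,2,3,1,4,3,2,0,5,4,3] [.braid 9 4 3, .swap 8 5 3, .swap 7 0 3, .braid 5 3 2, .swap 4 4 2, .swap 3 1 2, .braid 1 2 3, .swap 0 0 3] (by decide) (by decide) (by decide)
  · exact step rfl claim5 ht [0,2,3,1,4,3,2,0,5,4,3] 5 [1] [0,2,3,1,4,3,2,0,5,4,3] [.swap 10 3 5, .braid 8 5 4, .swap 7 0 4, .swap 6 2 4, .braid 4 4 3, .braid 2 3 1, .swap 1 2 1, .swap 0 0 1] (by decide) (by decide) (by decide)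
  · exact step rfl claim5 ht [0,2,3,1,4,3,2,5,4,3,1] 0 [] [0,2,3,1,4,3,2,0,5,4,3,1] [.swap 10 1 0, .swap 9 3 0, .swap 8 4 0, .swap 7 5 0] (by decide) (by decide) (by decide)
  · exact step rfl claim5 ht [0,2,3,1,4,3,2,5,4,3,1] 1 [] [0,2,3,1,4,3,2,5,4,3] [.del 10 1] (by decide) (by decide) (by decide)
  · exact step rfl claim5 ht [0,2,3,1,4,3,2,5,4,3,1] 2 [5] [0,2,3,1,4,3,2,5,4,3,1] [.swap 10 1 2, .swap 6 2 5, .swap 7 2 4, .braid 8 2 3, .swap 5 3 5, .braid 6 3 4, .swap 8 4 2, .braid 4 4 5, .swap 6 5 3, .swap 7 5 2, .swap 3 1 5, .swap 2 3 5, .swap 1 2 5, .swap 0 0 5] (by decide) (by decide) (by decide)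
  · exact step rfl claim5 ht [0,2,3,1,4,3,2,5,4,3,1] 3 [4] [0,2,3,1,4,3,2,5,4,3,1] [.braid 9 3 1, .swap 8 4 1, .swap 7 5 1, .swap 6 2 1, .swap 3 1 4, .braid 4 1 3, .braid 2 3 4, .swap 4 4 1, .swap 1 2 4, .swap 0 0 4] (by decide) (by decide) (by decide)
  · exact step rfl claim5 ht [0,2,3,1,4,3,2,5,4,3,1] 4 [3] [0,2,3,1,4,3,2,5,4,3,1] [.swap 10 1 4, .braid 8 4 3, .swap 7 5 3, .braid 5 3 2, .swap 4 4 2, .swap 3 1 2, .braid 1 2 3, .swap 0 0 3] (by decide) (by decide) (by decide)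
  · exact step rfl claim5 ht [0,2,3,1,4,3,2,5,4,3,1] 5 [1] [0,2,3,1,4,3,2,5,4,3,1] [.swap 10 1 5, .swap 9 3 5, .braid 7 5 4, .swap 6 2 4, .braid 4 4 3, .braid 2 3 1, .swap 1 2 1, .swap 0 0 1] (by decide) (by decide) (by decide)
  · exact step rfl claim5 ht [0,2,3,1,4,3,2,0,5,4,3,1] 0 [] [0,2,3,1,4,3,2,5,4,3,1] [.swap 7 0 5, .swap 8 0 4, .swap 9 0 3, .swap 10 0 1, .del 11 0] (by decide) (by decide) (by decide)
  · exact step rfl claim5 ht [0,2,3,1,4,3,2,0,5,4,3,1] 1 [] [0,2,3,1,4,3,2,0,5,4,3] [.del 11 1] (by decide) (by decide) (by decide)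
  · exact step rfl claim5 ht [0,2,3,1,4,3,2,0,5,4,3,1] 2 [] [0,2,3,1,4,3,2,0,5,4,3,1,2] [] (by decide) (by decide) (by decide)
  · exact step rfl claim5 ht [0,2,3,1,4,3,2,0,5,4,3,1] 3 [4] [0,2,3,1,4,3,2,0,5,4,3,1] [.braid 10 3 1, .swap 9 4 1, .swap 8 5 1, .swap 7 0 1, .swap 6 2 1, .swap 3 1 4, .braid 4 1 3, .braid 2 3 4, .swap 4 4 1, .swap 1 2 4, .swap 0 0 4] (by decide) (by decide) (by decide)
  · exact step rfl claim5 ht [0,2,3,1,4,3,2,0,5,4,3,1] 4 [3] [0,2,3,1,4,3,2,0,5,4,3,1] [.swap 11 1 4, .braid 9 4 3, .swap 8 5 3, .swap 7 0 3, .braid 5 3 2, .swap 4 4 2, .swap 3 1 2, .braid 1 2 3, .swap 0 0 3] (by decide) (by decide) (by decide)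
  · exact step rfl claim5 ht [0,2,3,1,4,3,2,0,5,4,3,1] 5 [1] [0,2,3,1,4,3,2,0,5,4,3,1] [.swap 11 1 5, .swap 10 3 5, .braid 8 5 4, .swap 7 0 4, .swap 6 2 4, .braid 4 4 3, .braid 2 3 1, .swap 1 2 1, .swap 0 0 1] (by decide) (by decide) (by decide)
  · exact step rfl claim5 ht [0,2,3,1,4,3,2,0,5,4,3,2] 0 [5] [0,2,3,1,4,3,2,0,5,4,3,2] [.swap 7 0 5, .swap 8 0 4, .swap 9 0 3, .braid 10 0 2, .swap 6 2 5, .swap 7 2 4, .braid 8 2 3, .swap 10 3 0, .swap 5 3 5, .braid 6 3 4, .swap 8 4 2, .swap 9 4 0, .braid 4 4 5, .swap 6 5 3, .swap 7 5 2, .swap 8 5 0, .swap 3 1 5, .swap 2 3 5, .swap 1 2 5, .swap 0 0 5] (by decide) (by decide) (by decide)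
  · exact step rfl claim5 ht [0,2,3,1,4,3,2,0,5,4,3,2] 1 [] [0,2,3,1,4,3,2,0,5,4,3,1,2] [.swap 11 2 1] (by decide) (by decide) (by decide)
  · exact step rfl claim5 ht [0,2,3,1,4,3,2,0,5,4,3,2] 2 [] [0,2,3,1,4,3,2,0,5,4,3] [.del 11 2] (by decide) (by decide) (by decide)
  · exact step rfl claim5 ht [0,2,3,1,4,3,2,0,5,4,3,2] 3 [2] [0,2,3,1,4,3,2,0,5,4,3,2] [.braid 10 3 2, .swap 9 4 2, .swap 8 5 2, .braid 6 2 0, .swap 5 3 0, .swap 4 4 0, .swap 3 1 0, .swap 2 3 0, .braid 0 0 2] (by decide) (by decide) (by decide)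
  · exact step rfl claim5 ht [0,2,3,1,4,3,2,0,5,4,3,2] 4 [3] [0,2,3,1,4,3,2,0,5,4,3,2] [.swap 11 2 4, .braid 9 4 3, .swap 8 5 3, .swap 7 0 3, .braid 5 3 2, .swap 4 4 2, .swap 3 1 2, .braid 1 2 3, .swap 0 0 3] (by decide) (by decide) (by decide)
  · exact step rfl claim5 ht [0,2,3,1,4,3,2,0,5,4,3,2] 5 [1] [0,2,3,1,4,3,2,0,5,4,3,2] [.swap 11 2 5, .swap 10 3 5, .braid 8 5 4, .swap 7 0 4, .swap 6 2 4, .braid 4 4 3, .braid 2 3 1, .swap 1 2 1, .swap 0 0 1] (by decide) (by decide) (by decide)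
  · exact step rfl claim5 ht [0,2,3,1,4,3,2,0,5,4,3,1,2] 0 [5] [0,2,3,1,4,3,2,0,5,4,3,1,2] [.swap 11 1 2, .swap 12 1 0, .swap 7 0 5, .swap 8 0 4, .swap 9 0 3, .braid 10 0 2, .swap 12 2 1, .swap 6 2 5, .swap 7 2 4, .braid 8 2 3, .swap 10 3 0, .swap 5 3 5, .braid 6 3 4, .swap 8 4 2, .swap 9 4 0, .braid 4 4 5, .swap 6 5 3, .swap 7 5 2, .swap 8 5 0, .swap 3 1 5, .swap 2 3 5, .swap 1 2 5, .swap 0 0 5] (by decide) (by decide) (by decide)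
  · exact step rfl claim5 ht [0,2,3,1,4,3,2,0,5,4,3,1,2] 1 [] [0,2,3,1,4,3,2,0,5,4,3,2] [.swap 11 1 2, .del 12 1] (by decide) (by decide) (by decide)
  · exact step rfl claim5 ht [0,2,3,1,4,3,2,0,5,4,3,1,2] 2 [] [0,2,3,1,4,3,2,0,5,4,3,1] [.del 12 2] (by decide) (by decide) (by decide)
  · exact step rfl claim5 ht [0,2,3,1,4,3,2,0,5,4,3,1,2] 3 [] [0,2,3,1,4,3,2,0,5,4,3,1,2,3] [] (by decide) (by decide) (by decide)
  · exact step rfl claim5 ht [0,2,3,1,4,3,2,0,5,4,3,1,2] 4 [3] [0,2,3,1,4,3,2,0,5,4,3,1,2] [.swap 12 2 4, .swap 11 1 4, .braid 9 4 3, .swap 8 5 3, .swap 7 0 3, .braid 5 3 2, .swap 4 4 2, .swap 3 1 2, .braid 1 2 3, .swap 0 0 3] (by decide) (by decide) (by decide)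
  · exact step rfl claim5 ht [0,2,3,1,4,3,2,0,5,4,3,1,2] 5 [1] [0,2,3,1,4,3,2,0,5,4,3,1,2] [.swap 12 2 5, .swap 11 1 5, .swap 10 3 5, .braid 8 5 4, .swap 7 0 4, .swap 6 2 4, .braid 4 4 3, .braid 2 3 1, .swap 1 2 1, .swap 0 0 1] (by decide) (by decide) (by decide)
  · exact step rfl claim5 ht [0,2,3,1,4,3,2,0,5,4,3,1,2,3] 0 [5] [0,2,3,1,4,3,2,0,5,4,3,1,2,3] [.swap 13 3 0, .swap 11 1 2, .swap 12 1 0, .swap 7 0 5, .swap 8 0 4, .swap 9 0 3, .braid 10 0 2, .swap 12 2 1, .swap 6 2 5, .swap 7 2 4, .braid 8 2 3, .swap 10 3 0, .swap 5 3 5, .braid 6 3 4, .swap 8 4 2, .swap 9 4 0, .braid 4 4 5, .swap 6 5 3, .swap 7 5 2, .swap 8 5 0, .swap 3 1 5, .swap 2 3 5, .swap 1 2 5, .swap 0 0 5] (by decide) (by decide) (by decide)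
  · exact step rfl claim5 ht [0,2,3,1,4,3,2,0,5,4,3,1,2,3] 1 [2] [0,2,3,1,4,3,2,0,5,4,3,1,2,3] [.swap 11 1 2, .braid 12 1 3, .braid 10 3 2, .swap 9 4 2, .swap 8 5 2, .braid 6 2 0, .swap 5 3 0, .swap 4 4 0, .swap 3 1 0, .swap 2 3 0, .swap 12 2 1, .braid 0 0 2] (by decide) (by decide) (by decide)
  · exact step rfl claim5 ht [0,2,3,1,4,3,2,0,5,4,3,1,2,3] 2 [4] [0,2,3,1,4,3,2,0,5,4,3,1,2,3] [.braid 12 2 3, .braid 10 3 1, .swap 9 4 1, .swap 8 5 1, .swap 7 0 1, .swap 6 2 1, .swap 3 1 4, .braid 4 1 3, .braid 2 3 4, .swap 4 4 1, .swap 1 2 4, .swap 0 0 4] (by decide) (by decide) (by decide)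
  · exact step rfl claim5 ht [0,2,3,1,4,3,2,0,5,4,3,1,2,3] 3 [] [0,2,3,1,4,3,2,0,5,4,3,1,2] [.del 13 3] (by decide) (by decide) (by decide)
  · exact step rfl claim5 ht [0,2,3,1,4,3,2,0,5,4,3,1,2,3] 4 [] [0,2,3,1,4,3,2,0,5,4,3,1,2,3,4] [] (by decide) (by decide) (by decide)
  · exact step rfl claim5 ht [0,2,3,1,4,3,2,0,5,4,3,1,2,3] 5 [1] [0,2,3,1,4,3,2,0,5,4,3,1,2,3] [.swap 13 3 5, .swap 12 2 5, .swap 11 1 5, .swap 10 3 5, .braid 8 5 4, .swap 7 0 4, .swap 6 2 4, .braid 4 4 3, .braid 2 3 1, .swap 1 2 1, .swap 0 0 1] (by decide) (by decide) (by decide)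
  · exact step rfl claim5 ht [0,2,3,1,4,3,2,0,5,4,3,1,2,3,4] 0 [5] [0,2,3,1,4,3,2,0,5,4,3,1,2,3,4] [.swap 14 4 0, .swap 13 3 0, .swap 11 1 2, .swap 12 1 0, .swap 7 0 5, .swap 8 0 4, .swap 9 0 3, .braid 10 0 2, .swap 12 2 1, .swap 6 2 5, .swap 7 2 4, .braid 8 2 3, .swap 10 3 0, .swap 5 3 5, .braid 6 3 4, .swap 8 4 2, .swap 9 4 0, .braid 4 4 5, .swap 6 5 3, .swap 7 5 2, .swap 8 5 0, .swap 3 1 5, .swap 2 3 5, .swap 1 2 5, .swap 0 0 5] (by decide) (by decide) (by decide)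
  · exact step rfl claim5 ht [0,2,3,1,4,3,2,0,5,4,3,1,2,3,4] 1 [2] [0,2,3,1,4,3,2,0,5,4,3,1,2,3,4] [.swap 11 1 2, .swap 14 4 1, .braid 12 1 3, .braid 10 3 2, .swap 9 4 2, .swap 8 5 2, .braid 6 2 0, .swap 5 3 0, .swap 4 4 0, .swap 3 1 0, .swap 2 3 0, .swap 12 2 1, .braid 0 0 2] (by decide) (by decide) (by decide)
  · exact step rfl claim5 ht [0,2,3,1,4,3,2,0,5,4,3,1,2,3,4] 2 [4] [0,2,3,1,4,3,2,0,5,4,3,1,2,3,4] [.swap 14 4 2, .braid 12 2 3, .braid 10 3 1, .swap 9 4 1, .swap 8 5 1, .swap 7 0 1, .swap 6 2 1, .swap 3 1 4, .braid 4 1 3, .braid 2 3 4, .swap 4 4 1, .swap 1 2 4, .swap 0 0 4] (by decide) (by decide) (by decide)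
  · exact step rfl claim5 ht [0,2,3,1,4,3,2,0,5,4,3,1,2,3,4] 3 [3] [0,2,3,1,4,3,2,0,5,4,3,1,2,3,4] [.braid 13 3 4, .swap 12 2 4, .swap 11 1 4, .braid 9 4 3, .swap 8 5 3, .swap 7 0 3, .braid 5 3 2, .swap 4 4 2, .swap 3 1 2, .braid 1 2 3, .swap 0 0 3] (by decide) (by decide) (by decide)
  · exact step rfl claim5 ht [0,2,3,1,4,3,2,0,5,4,3,1,2,3,4] 4 [] [0,2,3,1,4,3,2,0,5,4,3,1,2,3] [.del 14 4] (by decide) (by decide) (by decide)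
  · exact step rfl claim5 ht [0,2,3,1,4,3,2,0,5,4,3,1,2,3,4] 5 [] [0,2,3,1,4,3,2,0,5,4,3,1,2,3,4,5] [] (by decide) (by decide) (by decide)
  · exact step rfl claim5 ht [0,2,3,1,4,3,2,0,5,4,3,1,2,3,4,5] 0 [5] [0,2,3,1,4,3,2,0,5,4,3,1,2,3,4,5] [.swap 15 5 0, .swap 14 4 0, .swap 13 3 0, .swap 11 1 2, .swap 12 1 0, .swap 7 0 5, .swap 8 0 4, .swap 9 0 3, .braid 10 0 2, .swap 12 2 1, .swap 6 2 5, .swap 7 2 4, .braid 8 2 3, .swap 10 3 0, .swap 5 3 5, .braid 6 3 4, .swap 8 4 2, .swap 9 4 0, .braid 4 4 5, .swap 6 5 3, .swap 7 5 2, .swap 8 5 0, .swap 3 1 5, .swap 2 3 5, .swap 1 2 5, .swap 0 0 5] (by decide) (by decide) (by decide)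
  · exact step rfl claim5 ht [0,2,3,1,4,3,2,0,5,4,3,1,2,3,4,5] 1 [2] [0,2,3,1,4,3,2,0,5,4,3,1,2,3,4,5] [.swap 11 1 2, .swap 15 5 1, .swap 14 4 1, .braid 12 1 3, .braid 10 3 2, .swap 9 4 2, .swap 8 5 2, .braid 6 2 0, .swap 5 3 0, .swap 4 4 0, .swap 3 1 0, .swap 2 3 0, .swap 12 2 1, .braid 0 0 2] (by decide) (by decide) (by decide)
  · exact step rfl claim5 ht [0,2,3,1,4,3,2,0,5,4,3,1,2,3,4,5] 2 [4] [0,2,3,1,4,3,2,0,5,4,3,1,2,3,4,5] [.swap 15 5 2, .swap 14 4 2, .braid 12 2 3, .braid 10 3 1, .swap 9 4 1, .swap 8 5 1, .swap 7 0 1, .swap 6 2 1, .swap 3 1 4, .braid 4 1 3, .braid 2 3 4, .swap 4 4 1, .swap 1 2 4, .swap 0 0 4] (by decide) (by decide) (by decide)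
  · exact step rfl claim5 ht [0,2,3,1,4,3,2,0,5,4,3,1,2,3,4,5] 3 [3] [0,2,3,1,4,3,2,0,5,4,3,1,2,3,4,5] [.swap 15 5 3, .braid 13 3 4, .swap 12 2 4, .swap 11 1 4, .braid 9 4 3, .swap 8 5 3, .swap 7 0 3, .braid 5 3 2, .swap 4 4 2, .swap 3 1 2, .braid 1 2 3, .swap 0 0 3] (by decide) (by decide) (by decide)
  · exact step rfl claim5 ht [0,2,3,1,4,3,2,0,5,4,3,1,2,3,4,5] 4 [1] [0,2,3,1,4,3,2,0,5,4,3,1,2,3,4,5] [.braid 14 4 5, .swap 13 3 5, .swap 12 2 5, .swap 11 1 5, .swap 10 3 5, .braid 8 5 4, .swap 7 0 4, .swap 6 2 4, .braid 4 4 3, .braid 2 3 1, .swap 1 2 1, .swap 0 0 1] (by decide) (by decide) (by decide)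
  · exact step rfl claim5 ht [0,2,3,1,4,3,2,0,5,4,3,1,2,3,4,5] 5 [] [0,2,3,1,4,3,2,0,5,4,3,1,2,3,4] [.del 15 5] (by decide) (by decide) (by decide)


theorem all_mem_T6 : ∀ w : Wd, w ∈ T6 := by
  intro w
  induction w using cs.simple_induction_right with
  | one =>
    have h0 : (1:Wd) ∈ T0 := List.mem_singleton.2 rfl
    have h1 : (1:Wd) * π ([]:List B) ∈ T1 :=
      List.mem_flatMap.2 ⟨1, h0, List.mem_map.2 ⟨[], by decide, rfl⟩⟩
    have h2 : ((1:Wd) * π ([]:List B)) * π ([]:List B) ∈ T2 :=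
      List.mem_flatMap.2 ⟨_, h1, List.mem_map.2 ⟨[], by decide, rfl⟩⟩
    have h3 : (((1:Wd) * π ([]:List B)) * π ([]:List B)) * π ([]:List B) ∈ T3 :=
      List.mem_flatMap.2 ⟨_, h2, List.mem_map.2 ⟨[], by decide, rfl⟩⟩
    have h4 : ((((1:Wd) * π ([]:List B)) * π ([]:List B)) * π ([]:List B)) * π ([]:List B) ∈ T4 :=
      List.mem_flatMap.2 ⟨_, h3, List.mem_map.2 ⟨[], by decide, rfl⟩⟩
    have h5 : (((((1:Wd) * π ([]:List B)) * π ([]:List B)) * π ([]:List B)) * π ([]:List B)) * π ([]:List B) ∈ T5 :=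
      List.mem_flatMap.2 ⟨_, h4, List.mem_map.2 ⟨[], by decide, rfl⟩⟩
    have h6 : ((((((1:Wd) * π ([]:List B)) * π ([]:List B)) * π ([]:List B)) * π ([]:List B)) * π ([]:List B)) * π ([]:List B) ∈ T6 :=
      List.mem_flatMap.2 ⟨_, h5, List.mem_map.2 ⟨[], by decide, rfl⟩⟩
    simpa [cs.wordProd_nil] using h6
  | mul_simple_right w i hw =>
    have hall : ∀ j : B, j ∈ gens6 := by decide
    exact claim6 w hw i (hall i)

instance finiteWd : Finite Wd := by
  have : (Set.univ : Set Wd) ⊆ {x | x ∈ T6} := fun x _ => all_mem_T6 x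
  exact Set.finite_univ_iff.1 (Set.Finite.subset (T6.finite_toSet) this)


lemma nine_dvd_card {G : Type*} [Group G] [Finite G] (a b : G)
    (hc : a * b = b * a) (ha : a ^ 3 = 1) (hb : b ^ 3 = 1)
    (hne : ∀ k l : ℕ, k < 3 → l < 3 → a ^ k * b ^ l = 1 → k = 0 ∧ l = 0) :
    9 ∣ Nat.card G := by
  have hcomm : Commute a b := hc
  let f : Multiplicative (ZMod 3 × ZMod 3) → G :=
    fun x => a ^ (x.toAdd.1.val) * b ^ (x.toAdd.2.val)
  have hmul : ∀ x y, f (x * y) = f x * f y := by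
    intro x y
    show a ^ ((x.toAdd.1 + y.toAdd.1).val) * b ^ ((x.toAdd.2 + y.toAdd.2).val) = _
    rw [ZMod.val_add, ZMod.val_add, ← pow_eq_pow_mod _ ha, ← pow_eq_pow_mod _ hb,
      pow_add, pow_add, (hcomm.pow_pow _ _).mul_mul_mul_comm]
  let φ : Multiplicative (ZMod 3 × ZMod 3) →* G := MonoidHom.mk' f hmul
  have hinj : Function.Injective φ := by
    rw [injective_iff_map_eq_one]
    intro x hx
    obtain ⟨h1, h2⟩ := hne _ _ (ZMod.val_lt x.toAdd.1) (ZMod.val_lt x.toAdd.2) hx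
    have e1 : x.toAdd.1 = 0 := by rwa [ZMod.val_eq_zero] at h1
    have e2 : x.toAdd.2 = 0 := by rwa [ZMod.val_eq_zero] at h2
    have : x.toAdd = 0 := Prod.ext e1 e2
    exact toAdd_eq_zero.1 this
  have hcard : Nat.card φ.range = 9 := by
    rw [Nat.card_congr (MonoidHom.ofInjective hinj).toEquiv.symm]
    simp [Nat.card_eq_fintype_card]
  calc (9:ℕ) = Nat.card φ.range := hcard.symm
    _ ∣ Nat.card G := Subgroup.card_subgroup_dvd_card _

lemma nine_dvd_sylow {G : Type*} [Group G] [Finite G] (h9 : 9 ∣ Nat.card G)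
    (P : Sylow 3 G) : 9 ∣ Nat.card ↥(P : Subgroup G) := by
  haveI : Fact (Nat.Prime 3) := ⟨Nat.prime_three⟩
  rw [Sylow.card_eq_multiplicity]
  have hpos : 0 < Nat.card G := Nat.card_pos
  have h2 : 2 ≤ (Nat.card G).factorization 3 := by
    rw [← Nat.Prime.pow_dvd_iff_le_factorization Nat.prime_three hpos.ne']
    simpa using h9
  calc (9:ℕ) = 3 ^ 2 := by norm_num
    _ ∣ 3 ^ (Nat.card G).factorization 3 := pow_dvd_pow 3 h2

def pv0 : Fin 27 → Fin 27 := ![1,0,2,3,4,5,6,7,8,9,12,11,10,15,14,13,17,16,19,18,21,20,22,23,24,25,26]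
def p0 : Equiv.Perm (Fin 27) := ⟨pv0, pv0, by decide, by decide⟩
def pv1 : Fin 27 → Fin 27 := ![0,1,2,4,3,6,5,9,8,7,10,11,12,13,14,15,16,17,20,21,18,19,23,22,24,25,26]
def p1 : Equiv.Perm (Fin 27) := ⟨pv1, pv1, by decide, by decide⟩
def pv2 : Fin 27 → Fin 27 := ![0,2,1,3,4,5,6,7,10,9,8,13,12,11,16,15,14,17,18,22,20,23,19,21,24,25,26]
def p2 : Equiv.Perm (Fin 27) := ⟨pv2, pv2, by decide, by decide⟩
def pv3 : Fin 27 → Fin 27 := ![0,1,3,2,4,5,8,7,6,11,10,9,12,13,14,15,18,19,16,17,20,21,22,24,23,25,26]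
def p3 : Equiv.Perm (Fin 27) := ⟨pv3, pv3, by decide, by decide⟩
def pv4 : Fin 27 → Fin 27 := ![0,1,2,5,6,3,4,7,8,9,10,14,12,16,11,17,13,15,18,19,20,21,22,23,25,24,26]
def p4 : Equiv.Perm (Fin 27) := ⟨pv4, pv4, by decide, by decide⟩
def pv5 : Fin 27 → Fin 27 := ![0,1,2,3,4,7,9,5,11,6,13,8,15,10,14,12,16,17,18,19,20,21,22,23,24,26,25]
def p5 : Equiv.Perm (Fin 27) := ⟨pv5, pv5, by decide, by decide⟩

def pf : B → Equiv.Perm (Fin 27) := ![p0,p1,p2,p3,p4,p5]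

lemma pf_liftable : CoxeterMatrix.E₆.IsLiftable pf := by
  unfold CoxeterMatrix.IsLiftable
  decide

noncomputable def ψ : Wd →* Equiv.Perm (Fin 27) := cs.lift ⟨pf, pf_liftable⟩

lemma ψs (i : B) : ψ (σ i) = pf i := cs.lift_apply_simple pf_liftable i

def aW : Wd := σ 0 * σ 2
def bW : Wd := σ 4 * σ 5

lemma haW : aW ^ 3 = 1 := by
  have h := cs.simple_mul_simple_pow 0 2
  rwa [show CoxeterMatrix.E₆ (0:B) (2:B) = 3 by decide] at h

lemma hbW : bW ^ 3 = 1 := by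
  have h := cs.simple_mul_simple_pow 4 5
  rwa [show CoxeterMatrix.E₆ (4:B) (5:B) = 3 by decide] at h

lemma commσ {i j : B} (h : CoxeterMatrix.E₆ i j = 2) : Commute (σ i) (σ j) := by
  have := comm2 h (1 : Wd)
  simpa [Commute, SemiconjBy] using this

lemma hcommW : aW * bW = bW * aW := by
  have c1 : Commute (σ 0) (σ 4) := commσ (by decide)
  have c2 : Commute (σ 0) (σ 5) := commσ (by decide)
  have c3 : Commute (σ 2) (σ 4) := commσ (by decide)
  have c4 : Commute (σ 2) (σ 5) := commσ (by decide)
  exact ((c1.mul_right c2).mul_left (c3.mul_right c4)).eq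

lemma hneW : ∀ k l : ℕ, k < 3 → l < 3 → aW ^ k * bW ^ l = 1 → k = 0 ∧ l = 0 := by
  intro k l hk hl h
  have key : (p0 * p2) ^ k * (p4 * p5) ^ l = 1 := by
    have := congrArg ψ h
    simp only [map_mul, map_pow, map_one, aW, bW, ψs] at this
    simpa [pf] using this
  interval_cases k <;> interval_cases l
  · exact ⟨rfl, rfl⟩
  · exact absurd key (by decide)
  · exact absurd key (by decide)
  · exact absurd key (by decide)
  · exact absurd key (by decide)
  · exact absurd key (by decide)
  · exact absurd key (by decide)
  · exact absurd key (by decide)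
  · exact absurd key (by decide)


lemma nineW : 9 ∣ Nat.card Wd := nine_dvd_card aW bW hcommW haW hbW hneW

end E6C

/-- In the Weyl group of type `E₆`, no centralizer `C_W(y)` contains a
self-normalizing subgroup of order 3. -/
theorem weyl_E6_centralizer_no_order_three_carter
    (y : CoxeterMatrix.E₆.Group)
    (X : Subgroup ↥(Subgroup.centralizer ({y} : Set CoxeterMatrix.E₆.Group)))
    (hX : Nat.card X = 3) :
    Subgroup.normalizer (X : Set ↥(Subgroup.centralizer ({y} : Set CoxeterMatrix.E₆.Group))) ≠ X := by
  intro hN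
  haveI : Fact (Nat.Prime 3) := ⟨Nat.prime_three⟩
  have hCdef : Subgroup.centralizer ({y} : Set E6C.Wd) = Subgroup.centralizer ({y} : Set E6C.Wd) := rfl
  have hyC : y ∈ Subgroup.centralizer ({y} : Set E6C.Wd) := by
    rw [Subgroup.mem_centralizer_iff]
    intro g hg
    rw [Set.mem_singleton_iff] at hg
    rw [hg]
  obtain ⟨yc, hycval⟩ : ∃ yc : ↥(Subgroup.centralizer ({y} : Set E6C.Wd)), (yc : E6C.Wd) = y :=
    ⟨⟨y, hyC⟩, rfl⟩
  have commall : ∀ c : Subgroup.centralizer ({y} : Set E6C.Wd), yc * c = c * yc := by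
    intro c
    ext
    simpa [hycval] using c.2 y (Set.mem_singleton y)
  have hyX : yc ∈ X := by
    rw [← hN, Subgroup.mem_normalizer_iff]
    intro h
    have : yc * h * yc⁻¹ = h := by rw [commall h, mul_inv_cancel_right]
    rw [this]
  have hXp : IsPGroup 3 X := IsPGroup.of_card (by rw [hX, pow_one])
  obtain ⟨P, hXP⟩ := hXp.exists_le_sylow
  by_cases hPX : (P : Subgroup (Subgroup.centralizer ({y} : Set E6C.Wd))) = X
  · -- X is a Sylow 3-subgroup of C of card 3
    have hcardP : Nat.card ↥(P : Subgroup (Subgroup.centralizer ({y} : Set E6C.Wd))) = 3 := by rw [hPX, hX]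
    by_cases hy1 : y = 1
    · -- C = ⊤, but 9 ∣ card C
      have hC : Subgroup.centralizer ({y} : Set E6C.Wd) = ⊤ := by
        rw [hy1]
        ext z
        simp [Subgroup.mem_centralizer_iff]
      have h9C : 9 ∣ Nat.card (Subgroup.centralizer ({y} : Set E6C.Wd)) := by
        rw [hC]
        have : Nat.card ↥(⊤ : Subgroup E6C.Wd) = Nat.card E6C.Wd :=
          Nat.card_congr Subgroup.topEquiv.toEquiv
        rw [this]
        exact E6C.nineW
      have := E6C.nine_dvd_sylow h9C P
      rw [hcardP] at this
      norm_num at this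
    · -- y ≠ 1 : C = X has card 3; derive contradiction in E6C.Wd
      have hycne : yc ≠ 1 := by
        intro h
        apply hy1
        rw [← hycval]
        exact congrArg Subtype.val h
      have hyc3 : yc ^ 3 = 1 := by
        have h1 : (⟨yc, hyX⟩ : X) ^ Nat.card X = 1 := pow_card_eq_one'
        rw [hX] at h1
        have := congrArg Subtype.val h1
        simpa using this
      have hordy : orderOf yc = 3 := orderOf_eq_prime hyc3 hycne
      have hXz : Subgroup.zpowers yc = X :=
        Subgroup.eq_of_le_of_card_ge (Subgroup.zpowers_le.mpr hyX)
          (by rw [hX, Nat.card_zpowers, hordy])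
      have hcentral : ∀ (c : ↥(Subgroup.centralizer ({y} : Set E6C.Wd))) (w), w ∈ X →
          c * w * c⁻¹ = w := by
        intro c w hw
        rw [← hXz] at hw
        obtain ⟨k, rfl⟩ := Subgroup.mem_zpowers_iff.1 hw
        have hco : Commute (yc ^ k) c := (Commute.zpow_left (commall c) k)
        rw [← hco.eq, mul_inv_cancel_right]
      have hXtop : X = ⊤ := by
        rw [← hN, eq_top_iff]
        intro c _
        rw [Subgroup.mem_normalizer_iff]
        intro h
        constructor
        · intro hh
          rw [hcentral c h hh]
          exact hh
        · intro hh
          have h2 := hcentral c⁻¹ _ hh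
          rw [inv_inv] at h2
          have h3 : h = c * h * c⁻¹ := by rw [← h2]; group
          rw [h3]
          exact hh
      have hcardC : Nat.card ↥(Subgroup.centralizer ({y} : Set E6C.Wd)) = 3 := by
        rw [hXtop] at hX
        rw [← hX]
        exact (Nat.card_congr Subgroup.topEquiv.toEquiv).symm
      -- now work in E6C.Wd
      have hy3 : y ^ 3 = 1 := by
        have h := congrArg Subtype.val hyc3
        simpa [hycval] using h
      have hordyW : orderOf y = 3 := orderOf_eq_prime hy3 hy1
      have hzW : IsPGroup 3 (Subgroup.zpowers y) :=
        IsPGroup.of_card (by rw [Nat.card_zpowers, hordyW, pow_one])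
      obtain ⟨Q, hQle⟩ := hzW.exists_le_sylow
      have h9Q : 9 ∣ Nat.card ↥(Q : Subgroup E6C.Wd) := E6C.nine_dvd_sylow E6C.nineW Q
      have hyQ : y ∈ (Q : Subgroup E6C.Wd) := hQle (Subgroup.mem_zpowers y)
      haveI : Nontrivial ↥(Q : Subgroup E6C.Wd) :=
        ⟨⟨⟨y, hyQ⟩, 1, fun h => hy1 (congrArg Subtype.val h)⟩⟩
      haveI hZ : Nontrivial ↥(Subgroup.center ↥(Q : Subgroup E6C.Wd)) :=
        Q.isPGroup'.center_nontrivial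
      obtain ⟨z, hz1⟩ := exists_ne (1 : ↥(Subgroup.center ↥(Q : Subgroup E6C.Wd)))
      have hzcen : ∀ q : ↥(Q : Subgroup E6C.Wd), q * (z : ↥(Q : Subgroup E6C.Wd)) =
          (z : ↥(Q : Subgroup E6C.Wd)) * q := fun q => Subgroup.mem_center_iff.1 z.2 q
      have hzvne : ((z : ↥(Q : Subgroup E6C.Wd)) : E6C.Wd) ≠ 1 := by
        intro h
        apply hz1
        ext
        exact h
      have hzvC : ((z : ↥(Q : Subgroup E6C.Wd)) : E6C.Wd) ∈ Subgroup.centralizer ({y} : Set E6C.Wd) := by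
        rw [Subgroup.mem_centralizer_iff]
        intro g hg
        rw [Set.mem_singleton_iff] at hg
        rw [hg]
        exact congrArg Subtype.val (hzcen ⟨y, hyQ⟩)
      -- zv generates the same group as y
      have hzmem : (⟨_, hzvC⟩ : ↥(Subgroup.centralizer ({y} : Set E6C.Wd))) ∈ Subgroup.zpowers yc := by
        rw [hXz, hXtop]
        trivial
      obtain ⟨k, hk⟩ := Subgroup.mem_zpowers_iff.1 hzmem
      have hkval : ((yc ^ k : ↥(Subgroup.centralizer ({y} : Set E6C.Wd))) : E6C.Wd)
          = ((z : ↥(Q : Subgroup E6C.Wd)) : E6C.Wd) := congrArg Subtype.val hk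
      have hzv3 : ((z : ↥(Q : Subgroup E6C.Wd)) : E6C.Wd) ^ 3 = 1 := by
        have h1 : (yc ^ k) ^ 3 = 1 := by
          rw [← zpow_natCast (yc ^ k), ← zpow_mul, mul_comm, zpow_mul]
          rw [zpow_natCast, hyc3, one_zpow]
        have h2 := congrArg Subtype.val h1
        simpa [hkval] using h2
      have hordz : orderOf ((z : ↥(Q : Subgroup E6C.Wd)) : E6C.Wd) = 3 := orderOf_eq_prime hzv3 hzvne
      have hzple : Subgroup.zpowers ((z : ↥(Q : Subgroup E6C.Wd)) : E6C.Wd) ≤ Subgroup.zpowers y := by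
        rw [Subgroup.zpowers_le]
        rw [Subgroup.mem_zpowers_iff]
        refine ⟨k, ?_⟩
        have := congrArg Subtype.val hk
        simpa [hycval] using this
      have hzpeq : Subgroup.zpowers ((z : ↥(Q : Subgroup E6C.Wd)) : E6C.Wd) = Subgroup.zpowers y :=
        Subgroup.eq_of_le_of_card_ge hzple
          (by rw [Nat.card_zpowers, Nat.card_zpowers, hordz, hordyW])
      have hymem : y ∈ Subgroup.zpowers ((z : ↥(Q : Subgroup E6C.Wd)) : E6C.Wd) := by
        rw [hzpeq]
        exact Subgroup.mem_zpowers y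
      obtain ⟨m, hm⟩ := Subgroup.mem_zpowers_iff.1 hymem
      -- every element of Q centralizes y
      have hQC : ∀ q : ↥(Q : Subgroup E6C.Wd), (q : E6C.Wd) ∈ Subgroup.centralizer ({y} : Set E6C.Wd) := by
        intro q
        rw [Subgroup.mem_centralizer_iff]
        intro g hg
        rw [Set.mem_singleton_iff] at hg
        rw [hg]
        have hco : Commute ((z : ↥(Q : Subgroup E6C.Wd)) : E6C.Wd) (q : E6C.Wd) :=
          (congrArg Subtype.val (hzcen q)).symm
        have := (hco.zpow_left m).eq
        rw [hm] at this
        exact this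
      have hinj : Function.Injective
          (fun q : ↥(Q : Subgroup E6C.Wd) =>
            (⟨(q : E6C.Wd), hQC q⟩ : ↥(Subgroup.centralizer ({y} : Set E6C.Wd)))) := by
        intro q1 q2 h
        have h2 := congrArg Subtype.val h
        exact Subtype.ext h2
      have hle := Nat.card_le_card_of_injective _ hinj
      rw [hcardC] at hle
      have h9 : 9 ≤ Nat.card ↥(Q : Subgroup E6C.Wd) :=
        Nat.le_of_dvd Nat.card_pos h9Q
      omega
  · -- X < P : normalizer grows inside P
    haveI : Finite ↥(P : Subgroup (Subgroup.centralizer ({y} : Set E6C.Wd))) := inferInstance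
    have hnil : Group.IsNilpotent ↥(P : Subgroup (Subgroup.centralizer ({y} : Set E6C.Wd))) := P.isPGroup'.isNilpotent
    have hcond := normalizerCondition_of_isNilpotent (G := ↥(P : Subgroup (Subgroup.centralizer ({y} : Set E6C.Wd))))
    have hlt : X.subgroupOf ↑P < ⊤ := by
      rw [lt_top_iff_ne_top]
      intro htop
      rw [Subgroup.subgroupOf_eq_top] at htop
      exact hPX (le_antisymm htop hXP)
    obtain ⟨g, hgn, hgX⟩ := SetLike.exists_of_lt (hcond _ hlt)
    have hgC : (g : ↥(Subgroup.centralizer ({y} : Set E6C.Wd))) ∈ Subgroup.normalizer (X : Set ↥(Subgroup.centralizer ({y} : Set E6C.Wd))) := by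
      rw [Subgroup.mem_normalizer_iff]
      intro h
      constructor
      · intro hh
        have hhP : h ∈ (P : Subgroup (Subgroup.centralizer ({y} : Set E6C.Wd))) := hXP hh
        have := (Subgroup.mem_normalizer_iff.1 hgn ⟨h, hhP⟩).1
          (Subgroup.mem_subgroupOf.2 hh)
        exact Subgroup.mem_subgroupOf.1 this
      · intro hh
        have hconjP : (g : ↥(Subgroup.centralizer ({y} : Set E6C.Wd))) * h * (g : ↥(Subgroup.centralizer ({y} : Set E6C.Wd)))⁻¹ ∈ (P : Subgroup (Subgroup.centralizer ({y} : Set E6C.Wd))) := hXP hh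
        have hhP : h ∈ (P : Subgroup (Subgroup.centralizer ({y} : Set E6C.Wd))) := by
          have : h = (g : ↥(Subgroup.centralizer ({y} : Set E6C.Wd)))⁻¹ * ((g : ↥(Subgroup.centralizer ({y} : Set E6C.Wd))) * h * (g : ↥(Subgroup.centralizer ({y} : Set E6C.Wd)))⁻¹) * (g : ↥(Subgroup.centralizer ({y} : Set E6C.Wd))) := by group
          rw [this]
          exact Subgroup.mul_mem _ (Subgroup.mul_mem _ (Subgroup.inv_mem _ g.2) hconjP) g.2
        have := (Subgroup.mem_normalizer_iff.1 hgn ⟨h, hhP⟩).2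
          (by rwa [Subgroup.mem_subgroupOf])
        exact Subgroup.mem_subgroupOf.1 this
    rw [hN] at hgC
    exact hgX (Subgroup.mem_subgroupOf.2 hgC)
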